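/- arXiv:2006.16933 — 3 statements merged into one kernel-verified Lean document; each statement's English description precedes it below -/
import Mathlib

section
/- Let ψ, α : ℝⁿ → (-∞,∞] be lower semi-continuous with α bounded below and α(0), ψ(0) < ∞. Write φ = ψ*. Then at every point x₀ where φ is differentiable, the one-sided derivative (d/dt)|_{t=0⁺} (ψ + tα)*(x₀) exists and equals -α(∇φ(x₀)). -/
open MeasureTheory Filter Topology Set
open scoped ENNReal NNReal

noncomputable section

abbrev Euc (n : ℕ) := EuclideanSpace ℝ (Fin n)

variable {n : ℕ}

/-- Legendre transform of an extended-real-valued function. -/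
def legendre (ψ : Euc n → EReal) (x : Euc n) : EReal :=
  ⨆ y, ((inner ℝ x y : ℝ) : EReal) - ψ y

/-- Log-concavity. -/
def IsLogConcave (f : Euc n → ℝ) : Prop :=
  (∀ x, 0 ≤ f x) ∧ ∀ x y : Euc n, ∀ l : ℝ, 0 ≤ l → l ≤ 1 →
    f x ^ (1 - l) * f y ^ l ≤ f ((1 - l) • x + l • y)

/-- `- log f`, with value `⊤` where `f` vanishes. -/
def negLog (f : Euc n → ℝ) (x : Euc n) : EReal :=
  if f x = 0 then ⊤ else ((- Real.log (f x) : ℝ) : EReal)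

/-- The support function `h_f = (-log f)^*`. -/
def suppFn (f : Euc n → ℝ) : Euc n → EReal := legendre (negLog f)

/-- The gradient `∇φ` of `φ = - log f`. -/
def negLogGrad (f : Euc n → ℝ) (x : Euc n) : Euc n :=
  gradient (fun y => - Real.log (f y)) x

/-- The measure `f(x) dx`. -/
def fMeasure (f : Euc n → ℝ) : Measure (Euc n) :=
  volume.withDensity fun x => ENNReal.ofReal (f x)

/-- Positive part of an extended real, as an element of `[0,∞]`. -/
def posPart (a : EReal) : ℝ≥0∞ := if a = ⊤ then ⊤ else ENNReal.ofReal a.toReal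

/-- `∫ ρ dS_f = ∫ ρ(∇φ(x)) f(x) dx` as an extended real number. -/
def SfInt (f : Euc n → ℝ) (ρ : Euc n → EReal) : EReal :=
  ((∫⁻ x, posPart (ρ (negLogGrad f x)) ∂(fMeasure f) : ℝ≥0∞) : EReal)
    - ((∫⁻ x, posPart (-(ρ (negLogGrad f x))) ∂(fMeasure f) : ℝ≥0∞) : EReal)

/-- The Asplund sum (sup-convolution) of two log-concave functions. -/
def asplund (f g : Euc n → ℝ) (x : Euc n) : ℝ := ⨆ y, f y * g (x - y)

/-- Dilation `(t·g)(x) = g(x/t)^t`. -/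
def dil (t : ℝ) (g : Euc n → ℝ) (x : Euc n) : ℝ := g (t⁻¹ • x) ^ t

/-- Difference quotient of `t ↦ ∫ f ⋆ (t·g)` at `0`, as an extended real. -/
def deltaQuot (f g : Euc n → ℝ) (t : ℝ) : EReal :=
  (((∫⁻ x, ENNReal.ofReal (asplund f (dil t g) x) : ℝ≥0∞) : EReal)
    - ((∫⁻ x, ENNReal.ofReal (f x) : ℝ≥0∞) : EReal)) * ((t⁻¹ : ℝ) : EReal)

/-- Essential continuity of a log-concave function. -/
def EssCont (f : Euc n → ℝ) : Prop :=
  μH[(n : ℝ) - 1] {x : Euc n | ¬ ContinuousAt f x} = 0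

/-- `e^{-a}` for an extended real `a`, valued in `[0,∞]`. -/
def expNeg (a : EReal) : ℝ≥0∞ :=
  if a = ⊤ then 0 else if a = ⊥ then ⊤ else ENNReal.ofReal (Real.exp (- a.toReal))

set_option maxHeartbeats 1000000 in
/-- first variation of the Legendre transform: if `φ = ψ*` is differentiable
at `x₀`, then `(d/dt)|_{t=0⁺} (ψ + tα)*(x₀) = -α(∇φ(x₀))`. -/
theorem statement2 {n : ℕ} (ψ α : Euc n → EReal)
    (hψ : LowerSemicontinuous ψ) (hα : LowerSemicontinuous α)
    (hbdd : ∃ M : ℝ, ∀ y, (M : EReal) ≤ α y)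
    (hα0 : α 0 ≠ ⊤) (hψ0 : ψ 0 ≠ ⊤)
    (x₀ : Euc n) (φr : Euc n → ℝ) (y₀ : Euc n)
    (hfin : ∀ᶠ x in 𝓝 x₀, legendre ψ x = (φr x : EReal))
    (hgrad : HasGradientAt φr y₀ x₀) :
    Tendsto (fun t : ℝ =>
        (legendre (fun y => ψ y + (t : EReal) * α y) x₀ - (φr x₀ : EReal))
          * ((t⁻¹ : ℝ) : EReal))
      (𝓝[>] 0) (𝓝 (- α y₀)) := by
  classical
  obtain ⟨M, hM⟩ := hbdd
  set L : ℝ := φr x₀ with hLdef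
  have hφx₀ : legendre ψ x₀ = (L : EReal) := hfin.self_of_nhds
  have hle : ∀ y, ((inner ℝ x₀ y : ℝ) : EReal) - ψ y ≤ (L : EReal) := by
    intro y
    rw [← hφx₀]
    exact le_iSup (fun y => ((inner ℝ x₀ y : ℝ) : EReal) - ψ y) y
  have hψbot : ∀ y, ψ y ≠ ⊥ := by
    intro y hy
    have h := hle y
    rw [hy, EReal.coe_sub_bot] at h
    simp at h
  have hαbot : ∀ y, α y ≠ ⊥ := fun y h => by
    have := hM y; rw [h] at this; simp at this
  -- Key Lemma A: uniform upper bound on the Legendre integrand away from y₀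
  have keyA : ∀ η : ℝ, 0 < η → ∃ r : ℝ, 0 < r ∧ ∀ y : Euc n,
      ((inner ℝ x₀ y : ℝ) : EReal) - ψ y ≤ ((L + r * η - r * ‖y - y₀‖ : ℝ) : EReal) := by
    intro η hη
    have hlo : (fun x => φr x - φr x₀ - inner ℝ y₀ (x - x₀)) =o[𝓝 x₀] fun x => x - x₀ := by
      simpa [InnerProductSpace.toDual_apply_apply] using hgrad.hasFDerivAt.isLittleO
    have h1 : ∀ᶠ x in 𝓝 x₀, ‖φr x - φr x₀ - inner ℝ y₀ (x - x₀)‖ ≤ η * ‖x - x₀‖ := by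
      simpa using hlo.def hη
    obtain ⟨r', hr', hball⟩ := Metric.eventually_nhds_iff.mp (h1.and hfin)
    refine ⟨r' / 2, by positivity, ?_⟩
    set r : ℝ := r' / 2 with hrdef
    have hrpos : 0 < r := by positivity
    intro y
    by_cases hyy : y = y₀
    · rw [hyy]
      refine (hle y₀).trans ?_
      rw [EReal.coe_le_coe_iff]
      simp only [sub_self, norm_zero]
      nlinarith
    · set d : Euc n := y - y₀ with hddef
      have hd : d ≠ 0 := sub_ne_zero.mpr hyy
      have hdn : 0 < ‖d‖ := norm_pos_iff.mpr hd
      set u : Euc n := (‖d‖⁻¹ : ℝ) • d with hudef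
      have hun : ‖u‖ = 1 := by
        rw [hudef, norm_smul]
        simp [abs_of_pos (inv_pos.mpr hdn), inv_mul_cancel₀ hdn.ne']
      set x : Euc n := x₀ + r • u with hxdef
      have hxsub : x - x₀ = r • u := by rw [hxdef]; abel
      have hxn : ‖x - x₀‖ = r := by
        rw [hxsub, norm_smul, hun, mul_one, Real.norm_eq_abs, abs_of_pos hrpos]
      have hxd : dist x x₀ < r' := by
        rw [dist_eq_norm, hxn]; linarith
      obtain ⟨hx1, hx2⟩ := hball hxd
      have hx3 : ((inner ℝ x y : ℝ) : EReal) - ψ y ≤ (φr x : EReal) := by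
        rw [← hx2]
        exact le_iSup (fun y => ((inner ℝ x y : ℝ) : EReal) - ψ y) y
      rcases eq_or_ne (ψ y) ⊤ with h | h
      · rw [h, EReal.sub_top]; exact bot_le
      obtain ⟨s, hs⟩ : ∃ s : ℝ, ψ y = s := ⟨(ψ y).toReal, (EReal.coe_toReal h (hψbot y)).symm⟩
      rw [hs, ← EReal.coe_sub] at hx3 ⊢
      rw [EReal.coe_le_coe_iff] at hx3 ⊢
      -- auxiliary real computations
      have f2 : |φr x - L - inner ℝ y₀ (x - x₀)| ≤ η * r := by
        have := hx1; rw [hxn] at this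
        simpa [Real.norm_eq_abs, hLdef] using this
      have hin : (inner ℝ y₀ (x - x₀) : ℝ) = r * inner ℝ y₀ u := by
        rw [hxsub, real_inner_smul_right]
      have f3 : (inner ℝ x y : ℝ) = inner ℝ x₀ y + r * inner ℝ u y := by
        have : x = x₀ + r • u := hxdef
        rw [this, inner_add_left, real_inner_smul_left]
      have f4 : (inner ℝ u y : ℝ) - inner ℝ y₀ u = ‖d‖ := by
        have h1 : (inner ℝ u y : ℝ) - inner ℝ u y₀ = inner ℝ u d := by
          rw [hddef, inner_sub_right]
        have h2 : (inner ℝ u d : ℝ) = ‖d‖ := by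
          rw [hudef, real_inner_smul_left, real_inner_self_eq_norm_sq, pow_two]
          field_simp
        have h3 : (inner ℝ y₀ u : ℝ) = inner ℝ u y₀ := real_inner_comm _ _
        rw [h3]; rw [← h1] at h2; linarith
      have f5 : φr x ≤ L + inner ℝ y₀ (x - x₀) + η * r := by
        have := abs_le.mp f2; linarith [this.2]
      rw [hin] at f5
      nlinarith [f4, f3, hx3, f5]
  -- Key Lemma B: the supremum is attained at y₀
  have hatt : ψ y₀ = ((inner ℝ x₀ y₀ - L : ℝ) : EReal) := by
    set m : ℝ := inner ℝ x₀ y₀ - L with hmdef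
    have hge : ((m : ℝ) : EReal) ≤ ψ y₀ := by
      rcases eq_or_ne (ψ y₀) ⊤ with h | h
      · rw [h]; exact le_top
      obtain ⟨s, hs⟩ : ∃ s : ℝ, ψ y₀ = s := ⟨(ψ y₀).toReal, (EReal.coe_toReal h (hψbot y₀)).symm⟩
      have := hle y₀
      rw [hs, ← EReal.coe_sub, EReal.coe_le_coe_iff] at this
      rw [hs, EReal.coe_le_coe_iff, hmdef]
      linarith
    refine le_antisymm ?_ hge
    by_contra hcon
    push_neg at hcon
    obtain ⟨c, hc1, hc2⟩ := EReal.lt_iff_exists_real_btwn.mp hcon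
    rw [EReal.coe_lt_coe_iff] at hc1
    set ε : ℝ := c - m with hεdef
    have hεpos : 0 < ε := by linarith
    obtain ⟨ρ0, hρ0, hnear⟩ := Metric.eventually_nhds_iff.mp (hψ y₀ (c : EReal) hc2)
    set ρ : ℝ := min ρ0 (ε / (2 * (‖x₀‖ + 1))) with hρdef
    have hρpos : 0 < ρ := lt_min hρ0 (by positivity)
    obtain ⟨r, hrpos, hA⟩ := keyA (ρ / 2) (by positivity)
    set δ : ℝ := min (ε / 2) (r * ρ / 2) with hδdef
    have hδpos : 0 < δ := lt_min (by positivity) (by positivity)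
    have hsup : ∀ y : Euc n, ((inner ℝ x₀ y : ℝ) : EReal) - ψ y ≤ ((L - δ : ℝ) : EReal) := by
      intro y
      by_cases hyn : ‖y - y₀‖ < ρ
      · -- near y₀ : use lower semicontinuity
        have hcy : (c : EReal) < ψ y := by
          apply hnear
          rw [dist_eq_norm]
          exact lt_of_lt_of_le hyn (min_le_left _ _)
        rcases eq_or_ne (ψ y) ⊤ with h | h
        · rw [h, EReal.sub_top]; exact bot_le
        obtain ⟨s, hs⟩ : ∃ s : ℝ, ψ y = s := ⟨(ψ y).toReal, (EReal.coe_toReal h (hψbot y)).symm⟩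
        rw [hs, ← EReal.coe_sub, EReal.coe_le_coe_iff]
        rw [hs, EReal.coe_lt_coe_iff] at hcy
        have hip : (inner ℝ x₀ y : ℝ) ≤ inner ℝ x₀ y₀ + ‖x₀‖ * ‖y - y₀‖ := by
          have h1 : (inner ℝ x₀ y : ℝ) - inner ℝ x₀ y₀ = inner ℝ x₀ (y - y₀) := by
            rw [inner_sub_right]
          have h2 : (inner ℝ x₀ (y - y₀) : ℝ) ≤ ‖x₀‖ * ‖y - y₀‖ := real_inner_le_norm _ _
          linarith
        have hyρ : ‖y - y₀‖ ≤ ε / (2 * (‖x₀‖ + 1)) := le_of_lt (lt_of_lt_of_le hyn (min_le_right _ _))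
        have hx₀n : (0:ℝ) ≤ ‖x₀‖ := norm_nonneg _
        have hyn0 : (0:ℝ) ≤ ‖y - y₀‖ := norm_nonneg _
        have key : ‖x₀‖ * ‖y - y₀‖ ≤ ε / 2 := by
          have := mul_le_mul_of_nonneg_left hyρ hx₀n
          have h2 : ‖x₀‖ * (ε / (2 * (‖x₀‖ + 1))) ≤ ε / 2 := by
            rw [← mul_div_assoc, div_le_div_iff₀ (by positivity) (by positivity)]
            nlinarith
          linarith
        have hδε : δ ≤ ε / 2 := min_le_left _ _
        -- inner ℝ x₀ y - s ≤ L - δ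
        have : inner ℝ x₀ y - s ≤ inner ℝ x₀ y₀ + ε/2 - c := by linarith
        rw [hmdef] at hεdef
        linarith
      · -- far from y₀ : use keyA
        push_neg at hyn
        refine (hA y).trans ?_
        rw [EReal.coe_le_coe_iff]
        have hδr : δ ≤ r * ρ / 2 := min_le_right _ _
        nlinarith
    have : (L : EReal) ≤ ((L - δ : ℝ) : EReal) := by
      rw [← hφx₀]; exact iSup_le hsup
    rw [EReal.coe_le_coe_iff] at this
    linarith
  have hAbot : α y₀ ≠ ⊥ := hαbot y₀
  -- the main limit, via the order topology
  rw [tendsto_order]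
  constructor
  · -- lower bound branch
    intro a ha
    have hAtop : α y₀ ≠ ⊤ := by
      intro h
      rw [h] at ha
      simp only [EReal.neg_top] at ha
      exact bot_le.not_gt ha
    obtain ⟨Ar, hAr⟩ : ∃ Ar : ℝ, α y₀ = Ar := ⟨(α y₀).toReal, (EReal.coe_toReal hAtop hAbot).symm⟩
    filter_upwards [self_mem_nhdsWithin] with t ht
    have ht0 : (0:ℝ) < t := ht
    have hlow : ((L - t * Ar : ℝ) : EReal) ≤ legendre (fun y => ψ y + (t : EReal) * α y) x₀ := by
      have h1 : ((inner ℝ x₀ y₀ : ℝ) : EReal) - (ψ y₀ + (t : EReal) * α y₀)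
          ≤ legendre (fun y => ψ y + (t : EReal) * α y) x₀ :=
        le_iSup (fun y => ((inner ℝ x₀ y : ℝ) : EReal) - (ψ y + (t : EReal) * α y)) y₀
      have h2 : ψ y₀ + (t : EReal) * α y₀ = (((inner ℝ x₀ y₀ - L) + t * Ar : ℝ) : EReal) := by
        rw [hatt, hAr, ← EReal.coe_mul, ← EReal.coe_add]
      rw [h2, ← EReal.coe_sub] at h1
      have : (L - t * Ar : ℝ) = inner ℝ x₀ y₀ - (inner ℝ x₀ y₀ - L + t * Ar) := by ring
      rw [this]
      exact h1
    have hq : ((-Ar : ℝ) : EReal) ≤ (legendre (fun y => ψ y + (t : EReal) * α y) x₀ - (L : EReal))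
        * ((t⁻¹ : ℝ) : EReal) := by
      have h3 : ((- (t * Ar) : ℝ) : EReal) ≤
          legendre (fun y => ψ y + (t : EReal) * α y) x₀ - (L : EReal) := by
        have := EReal.sub_le_sub hlow (le_refl ((L : ℝ) : EReal))
        rw [← EReal.coe_sub] at this
        have he : (L - t * Ar - L : ℝ) = -(t * Ar) := by ring
        rw [he] at this
        exact this
      have h4 := mul_le_mul_of_nonneg_right h3
        (by exact_mod_cast (inv_nonneg.mpr ht0.le) : (0:EReal) ≤ ((t⁻¹ : ℝ) : EReal))
      have he : ((- (t * Ar) : ℝ) : EReal) * ((t⁻¹ : ℝ) : EReal) = ((-Ar : ℝ) : EReal) := by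
        rw [← EReal.coe_mul]
        congr 1
        field_simp
      rw [he] at h4
      exact h4
    refine lt_of_lt_of_le ?_ hq
    rw [hAr] at ha
    rw [EReal.coe_neg]
    exact ha
  · -- upper bound branch
    intro a ha
    obtain ⟨c, hc1, hc2⟩ := EReal.lt_iff_exists_real_btwn.mp ha
    set B : ℝ := -c with hBdef
    have hBA : ((B : ℝ) : EReal) < α y₀ := by
      rw [hBdef, EReal.coe_neg]
      exact EReal.neg_lt_of_neg_lt hc1
    obtain ⟨ρ, hρpos, hnear⟩ := Metric.eventually_nhds_iff.mp (hα y₀ (B : EReal) hBA)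
    obtain ⟨r, hrpos, hA⟩ := keyA (ρ / 2) (by positivity)
    set t₀ : ℝ := (r * ρ / 2) / (|B - M| + 1) with ht₀def
    have ht₀pos : 0 < t₀ := by positivity
    have hIoo : Ioo (0:ℝ) t₀ ∈ 𝓝[>] (0:ℝ) := Ioo_mem_nhdsGT_of_mem ⟨le_refl 0, ht₀pos⟩
    filter_upwards [hIoo] with t ht
    obtain ⟨ht0, htt₀⟩ := ht
    -- pointwise bound on the integrand
    have hsup : ∀ y : Euc n, ((inner ℝ x₀ y : ℝ) : EReal) - (ψ y + (t : EReal) * α y)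
        ≤ ((L - t * B : ℝ) : EReal) := by
      intro y
      rcases eq_or_ne (α y) ⊤ with hb | hb
      · rw [hb, EReal.coe_mul_top_of_pos ht0, EReal.add_top_of_ne_bot (hψbot y), EReal.sub_top]
        exact bot_le
      obtain ⟨b, hbb⟩ : ∃ b : ℝ, α y = b := ⟨(α y).toReal, (EReal.coe_toReal hb (hαbot y)).symm⟩
      rcases eq_or_ne (ψ y) ⊤ with h | h
      · rw [h, hbb, ← EReal.coe_mul, EReal.top_add_of_ne_bot (EReal.coe_ne_bot _), EReal.sub_top]
        exact bot_le
      obtain ⟨s, hs⟩ : ∃ s : ℝ, ψ y = s := ⟨(ψ y).toReal, (EReal.coe_toReal h (hψbot y)).symm⟩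
      have hsL : inner ℝ x₀ y - s ≤ L := by
        have := hle y
        rw [hs, ← EReal.coe_sub, EReal.coe_le_coe_iff] at this
        exact this
      have hbM : M ≤ b := by
        have := hM y; rw [hbb, EReal.coe_le_coe_iff] at this; exact this
      rw [hs, hbb, ← EReal.coe_mul, ← EReal.coe_add, ← EReal.coe_sub, EReal.coe_le_coe_iff]
      by_cases hyn : ‖y - y₀‖ < ρ
      · have hcy : B < b := by
          have : (B : EReal) < α y := hnear (show dist y y₀ < ρ by rw [dist_eq_norm]; exact hyn)
          rw [hbb, EReal.coe_lt_coe_iff] at this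
          exact this
        have h9 : t * B ≤ t * b := mul_le_mul_of_nonneg_left hcy.le ht0.le
        linarith
      · push_neg at hyn
        have hAy := hA y
        rw [hs, ← EReal.coe_sub, EReal.coe_le_coe_iff] at hAy
        have h5 : inner ℝ x₀ y - s ≤ L - r * ρ / 2 := by nlinarith
        have h6 : t * B - t * M ≤ r * ρ / 2 := by
          have h7 : t * (B - M) ≤ t * (|B - M| + 1) := by
            have : B - M ≤ |B - M| + 1 := (le_abs_self _).trans (by linarith)
            exact mul_le_mul_of_nonneg_left this ht0.le
          have h8 : t * (|B - M| + 1) ≤ r * ρ / 2 := by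
            have h8' : t < (r * ρ / 2) / (|B - M| + 1) := htt₀
            rw [lt_div_iff₀ (by positivity)] at h8'
            linarith
          nlinarith
        have h9 : t * M ≤ t * b := mul_le_mul_of_nonneg_left hbM ht0.le
        nlinarith [h5, h6, h9]
    have hgle : legendre (fun y => ψ y + (t : EReal) * α y) x₀ ≤ ((L - t * B : ℝ) : EReal) :=
      iSup_le hsup
    have hq : (legendre (fun y => ψ y + (t : EReal) * α y) x₀ - (L : EReal))
        * ((t⁻¹ : ℝ) : EReal) ≤ ((c : ℝ) : EReal) := by
      have h3 : legendre (fun y => ψ y + (t : EReal) * α y) x₀ - (L : EReal)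
          ≤ ((- (t * B) : ℝ) : EReal) := by
        have := EReal.sub_le_sub hgle (le_refl ((L : ℝ) : EReal))
        rw [← EReal.coe_sub] at this
        have he : (L - t * B - L : ℝ) = -(t * B) := by ring
        rw [he] at this
        exact this
      have h4 := mul_le_mul_of_nonneg_right h3
        (by exact_mod_cast (inv_nonneg.mpr ht0.le) : (0:EReal) ≤ ((t⁻¹ : ℝ) : EReal))
      have he : ((- (t * B) : ℝ) : EReal) * ((t⁻¹ : ℝ) : EReal) = ((c : ℝ) : EReal) := by
        rw [← EReal.coe_mul]
        congr 1
        rw [hBdef]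
        field_simp
      rw [he] at h4
      exact h4
    exact lt_of_le_of_lt hq hc2


end
end

section
/- Let f = e^{-φ} ∈ LC_n with 0 < ∫ f < ∞, set ψ = h_f = φ*, and let v : ℝⁿ → ℝ be bounded and continuous. Then the two-sided derivative (d/dt)|_{t=0} ∫ e^{-(ψ + tv)*} exists and equals ∫ v dS_f. -/
open MeasureTheory Filter Topology Set
open scoped ENNReal NNReal

noncomputable section

variable {n : ℕ}

namespace S16

/-- `φ = -log f` as a real valued function. -/
def phiR (f : Euc n → ℝ) : Euc n → ℝ := fun y => - Real.log (f y)

/-- The perturbed support function `ψ + t v`. -/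
def pertFn (f v : Euc n → ℝ) (t : ℝ) : Euc n → EReal :=
  fun y => suppFn f y + ((t * v y : ℝ) : EReal)

lemma negLog_eq {f : Euc n → ℝ} {x : Euc n} (hx : f x ≠ 0) :
    negLog f x = ((phiR f x : ℝ) : EReal) := by
  simp [negLog, hx, phiR]

lemma f_eq_exp {f : Euc n → ℝ} {x : Euc n} (hx : 0 < f x) :
    Real.exp (-(phiR f x)) = f x := by
  simp [phiR, Real.exp_log hx]

lemma convex_pos {f : Euc n → ℝ} (hlc : IsLogConcave f) :
    Convex ℝ {y : Euc n | 0 < f y} := by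
  intro x hx y hy a b ha hb hab
  have h := hlc.2 x y b hb (by linarith)
  have h1 : (1 : ℝ) - b = a := by linarith
  rw [h1] at h
  have hx' : (0:ℝ) < f x := hx
  have hy' : (0:ℝ) < f y := hy
  have : 0 < f x ^ a * f y ^ b :=
    mul_pos (Real.rpow_pos_of_pos hx' a) (Real.rpow_pos_of_pos hy' b)
  exact lt_of_lt_of_le this h

lemma convexOn_phiR {f : Euc n → ℝ} (hlc : IsLogConcave f) :
    ConvexOn ℝ {y : Euc n | 0 < f y} (phiR f) := by
  refine ⟨convex_pos hlc, ?_⟩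
  intro x hx y hy a b ha hb hab
  have h := hlc.2 x y b hb (by linarith)
  have h1 : (1 : ℝ) - b = a := by linarith
  rw [h1] at h
  have hx' : (0:ℝ) < f x := hx
  have hy' : (0:ℝ) < f y := hy
  have hprod : 0 < f x ^ a * f y ^ b :=
    mul_pos (Real.rpow_pos_of_pos hx' a) (Real.rpow_pos_of_pos hy' b)
  have hlog := Real.log_le_log hprod h
  rw [Real.log_mul (ne_of_gt (Real.rpow_pos_of_pos hx' a))
      (ne_of_gt (Real.rpow_pos_of_pos hy' b)),
    Real.log_rpow hx', Real.log_rpow hy'] at hlog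
  simp only [phiR, smul_eq_mul]
  linarith

lemma le_suppFn {f : Euc n → ℝ} {x : Euc n} (hx : 0 < f x) (y : Euc n) :
    (((inner ℝ y x : ℝ) - phiR f x : ℝ) : EReal) ≤ suppFn f y := by
  have h := le_iSup (fun w => ((inner ℝ y w : ℝ) : EReal) - negLog f w) x
  rwa [negLog_eq (ne_of_gt hx), ← EReal.coe_sub] at h

lemma suppFn_ne_bot {f : Euc n → ℝ} (hz : ∃ z, 0 < f z) (y : Euc n) :
    suppFn f y ≠ ⊥ := by
  obtain ⟨z, hz⟩ := hz
  intro h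
  have := le_suppFn hz y
  rw [h, le_bot_iff] at this
  exact EReal.coe_ne_bot _ this

lemma fenchel {f : Euc n → ℝ} {x y : Euc n} (hx : 0 < f x) (hy : suppFn f y ≠ ⊤) :
    (inner ℝ x y : ℝ) - (suppFn f y).toReal ≤ phiR f x := by
  have h := le_suppFn hx y
  have h2 : (inner ℝ y x : ℝ) - phiR f x ≤ (suppFn f y).toReal := by
    have := EReal.toReal_le_toReal h (EReal.coe_ne_bot _) hy
    rwa [EReal.toReal_coe] at this
  rw [real_inner_comm]
  linarith

lemma suppFn_zero_le {f : Euc n → ℝ} (hf0 : ∀ z, 0 ≤ f z) {B : ℝ} (hB : 0 < B)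
    (hfB : ∀ z, f z ≤ B) : suppFn f 0 ≤ ((Real.log B : ℝ) : EReal) := by
  refine iSup_le fun z => ?_
  by_cases hz : f z = 0
  · simp only [negLog, hz, if_pos, EReal.sub_top]
    exact bot_le
  · have hz' : 0 < f z := lt_of_le_of_ne (hf0 z) (Ne.symm hz)
    rw [negLog_eq hz, ← EReal.coe_sub, EReal.coe_le_coe_iff]
    have h3 : Real.log (f z) ≤ Real.log B := Real.log_le_log hz' (hfB z)
    have h4 : (inner ℝ (0 : Euc n) z : ℝ) = 0 := inner_zero_left z
    simp only [phiR]
    linarith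

lemma real_of_bounds {e : EReal} {r s : ℝ} (h1 : (r : EReal) ≤ e) (h2 : e ≤ (s : EReal)) :
    e = ((e.toReal : ℝ) : EReal) ∧ r ≤ e.toReal ∧ e.toReal ≤ s := by
  have hbot : e ≠ ⊥ := by
    intro h; rw [h, le_bot_iff] at h1; exact EReal.coe_ne_bot _ h1
  have htop : e ≠ ⊤ := by
    intro h; rw [h, top_le_iff] at h2; exact EReal.coe_ne_top _ h2
  refine ⟨(EReal.coe_toReal htop hbot).symm, ?_, ?_⟩
  · have := EReal.toReal_le_toReal h1 (EReal.coe_ne_bot _) htop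
    rwa [EReal.toReal_coe] at this
  · have := EReal.toReal_le_toReal h2 hbot (EReal.coe_ne_top _)
    rwa [EReal.toReal_coe] at this

lemma le_pert {f v : Euc n → ℝ} {y₀ : Euc n} (hy₀ : suppFn f y₀ ≠ ⊤)
    (hz : ∃ z, 0 < f z) (t : ℝ) (x : Euc n) :
    (((inner ℝ x y₀ : ℝ) - (suppFn f y₀).toReal - t * v y₀ : ℝ) : EReal) ≤
      legendre (pertFn f v t) x := by
  have h := le_iSup (fun y => ((inner ℝ x y : ℝ) : EReal) - pertFn f v t y) y₀
  obtain ⟨r, hr⟩ : ∃ r : ℝ, suppFn f y₀ = (r : EReal) :=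
    ⟨(suppFn f y₀).toReal, (EReal.coe_toReal hy₀ (suppFn_ne_bot hz y₀)).symm⟩
  have hrepr : pertFn f v t y₀ = ((r + t * v y₀ : ℝ) : EReal) := by
    rw [pertFn, hr, ← EReal.coe_add]
  rw [hrepr, ← EReal.coe_sub, sub_add_eq_sub_sub] at h
  rwa [hr, EReal.toReal_coe]

lemma pert_le {f v : Euc n → ℝ} {M : ℝ} (hv : ∀ y, |v y| ≤ M) {x : Euc n}
    (hx : 0 < f x) (hz : ∃ z, 0 < f z) (t : ℝ) :
    legendre (pertFn f v t) x ≤ ((phiR f x + |t| * M : ℝ) : EReal) := by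
  refine iSup_le fun y => ?_
  by_cases hy : suppFn f y = ⊤
  · rw [pertFn]
    simp only [hy, EReal.top_add_coe, EReal.sub_top]
    exact bot_le
  · obtain ⟨r, hr⟩ : ∃ r : ℝ, suppFn f y = (r : EReal) :=
      ⟨(suppFn f y).toReal, (EReal.coe_toReal hy (suppFn_ne_bot hz y)).symm⟩
    have htr : (suppFn f y).toReal = r := by rw [hr, EReal.toReal_coe]
    have hrepr : pertFn f v t y = ((r + t * v y : ℝ) : EReal) := by
      rw [pertFn, hr, ← EReal.coe_add]
    rw [hrepr, ← EReal.coe_sub, EReal.coe_le_coe_iff, ← htr]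
    have h1 := fenchel hx hy
    have h2 : |t * v y| ≤ |t| * M := by
      rw [abs_mul]; exact mul_le_mul_of_nonneg_left (hv y) (abs_nonneg t)
    have h3 := neg_abs_le (t * v y)
    linarith

lemma pert_ne_bot {f v : Euc n → ℝ} (h0 : suppFn f 0 ≠ ⊤) (hz : ∃ z, 0 < f z)
    (t : ℝ) (x : Euc n) : legendre (pertFn f v t) x ≠ ⊥ := by
  intro h
  have := le_pert (v := v) h0 hz t x
  rw [h, le_bot_iff] at this
  exact EReal.coe_ne_bot _ this


lemma lsc_legendre (ψ : Euc n → EReal) : LowerSemicontinuous (legendre ψ) := by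
  apply lowerSemicontinuous_iSup
  intro y
  set c := ψ y with hc
  clear_value c
  induction c using EReal.rec with
  | bot =>
      have : (fun x : Euc n => ((inner ℝ x y : ℝ) : EReal) - ⊥) = fun _ => ⊤ := by
        funext x; exact EReal.coe_sub_bot _
      rw [this]; exact lowerSemicontinuous_const
  | coe r =>
      have : (fun x : Euc n => ((inner ℝ x y : ℝ) : EReal) - (r : EReal)) =
          fun x => (((inner ℝ x y : ℝ) - r : ℝ) : EReal) := by
        funext x; rw [← EReal.coe_sub]
      rw [this]
      exact (continuous_coe_real_ereal.comp
        ((continuous_id.inner continuous_const).sub continuous_const)).lowerSemicontinuous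
  | top =>
      have : (fun x : Euc n => ((inner ℝ x y : ℝ) : EReal) - ⊤) = fun _ => ⊥ := by
        funext x; exact EReal.sub_top _
      rw [this]; exact lowerSemicontinuous_const

lemma measurable_legendre (ψ : Euc n → EReal) : Measurable (legendre ψ) :=
  (lsc_legendre ψ).measurable

lemma expNeg_coe (r : ℝ) : expNeg ((r : ℝ) : EReal) = ENNReal.ofReal (Real.exp (-r)) := by
  simp [expNeg]

lemma expNeg_top : expNeg ⊤ = 0 := by simp [expNeg]

lemma antitone_expNeg : Antitone (expNeg) := by
  intro a b hab
  induction a using EReal.rec with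
  | bot => simp [expNeg]
  | coe r =>
      induction b using EReal.rec with
      | bot => exact absurd hab (by simp)
      | coe s =>
          rw [expNeg_coe, expNeg_coe]
          exact ENNReal.ofReal_le_ofReal
            (Real.exp_le_exp.mpr (neg_le_neg (EReal.coe_le_coe_iff.mp hab)))
      | top => simp [expNeg]
  | top =>
      have : b = ⊤ := top_le_iff.mp hab
      simp [this]

lemma measurable_expNeg : Measurable expNeg := antitone_expNeg.measurable

lemma expNeg_ne_top {a : EReal} (ha : a ≠ ⊥) : expNeg a ≠ ⊤ := by
  by_cases h : a = ⊤
  · simp [h, expNeg]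
  · simp [expNeg, h, ha]

lemma abs_exp_sub_exp (p q : ℝ) : |Real.exp p - Real.exp q| ≤ Real.exp (max p q) * |p - q| := by
  wlog h : q ≤ p with H
  · have := H q p (le_of_not_ge h)
    rwa [abs_sub_comm, max_comm, abs_sub_comm q p] at this
  rw [abs_of_nonneg (sub_nonneg.mpr (Real.exp_le_exp.mpr h)), abs_of_nonneg (sub_nonneg.mpr h),
    max_eq_left h]
  have h1 : (q - p) + 1 ≤ Real.exp (q - p) := Real.add_one_le_exp _
  have h2 : Real.exp q = Real.exp p * Real.exp (q - p) := by
    rw [← Real.exp_add]; ring_nf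
  nlinarith [Real.exp_pos p]

lemma interior_nonempty {f : Euc n → ℝ} (hlc : IsLogConcave f)
    (hpos : 0 < ∫⁻ x, ENNReal.ofReal (f x)) :
    (interior {y : Euc n | 0 < f y}).Nonempty := by
  by_contra h
  rw [Set.not_nonempty_iff_eq_empty] at h
  set K := {y : Euc n | 0 < f y} with hK
  have hKc : Convex ℝ (closure K) := (convex_pos hlc).closure
  have hint : interior (closure K) = ∅ := by
    by_contra h2
    have h2' : (interior (closure K)).Nonempty := Set.nonempty_iff_ne_empty.mpr h2
    rw [hKc.interior_nonempty_iff_affineSpan_eq_top] at h2'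
    have hsub : closure K ⊆ (affineSpan ℝ K : Set (Euc n)) :=
      closure_minimal (subset_affineSpan ℝ K) (affineSpan ℝ K).closed_of_finiteDimensional
    have hle : affineSpan ℝ (closure K) ≤ affineSpan ℝ K := affineSpan_le.mpr hsub
    rw [h2', top_le_iff] at hle
    rw [hK] at hle
    have : (interior K).Nonempty :=
      ((convex_pos hlc).interior_nonempty_iff_affineSpan_eq_top).mpr hle
    rw [h] at this
    exact Set.not_nonempty_empty this
  have hnull : volume (closure K) = 0 := by
    have hfr := hKc.addHaar_frontier volume
    rwa [frontier, hint, diff_empty, closure_closure] at hfr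
  have hK0 : volume K = 0 := measure_mono_null subset_closure hnull
  have hzero : (∫⁻ x, ENNReal.ofReal (f x)) = 0 := by
    have hae : ∀ᵐ x : Euc n, x ∉ K := by
      rw [ae_iff]
      simpa using hK0
    have hae2 : ∀ᵐ x : Euc n, ENNReal.ofReal (f x) = 0 := by
      filter_upwards [hae] with x hx
      rw [ENNReal.ofReal_eq_zero]
      simpa [hK, not_lt] using hx
    rw [lintegral_congr_ae hae2, lintegral_zero]
  rw [hzero] at hpos
  exact lt_irrefl _ hpos


lemma continuousOn_phiR {f : Euc n → ℝ} (hlc : IsLogConcave f) :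
    ContinuousOn (phiR f) (interior {y : Euc n | 0 < f y}) :=
  (((convexOn_phiR hlc).subset interior_subset (convex_pos hlc).interior).continuousOn
    isOpen_interior)

lemma exists_ball_le {f : Euc n → ℝ} (hlc : IsLogConcave f)
    (hpos : 0 < ∫⁻ x, ENNReal.ofReal (f x)) :
    ∃ (x₀ : Euc n) (r₀ c : ℝ), 0 < r₀ ∧ 0 < c ∧ ∀ y ∈ Metric.ball x₀ r₀, c ≤ f y := by
  obtain ⟨x₀, hx₀⟩ := interior_nonempty hlc hpos
  have hca : ContinuousAt (phiR f) x₀ :=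
    (continuousOn_phiR hlc).continuousAt (isOpen_interior.mem_nhds hx₀)
  have h1 : ∀ᶠ y in 𝓝 x₀, phiR f y < phiR f x₀ + 1 :=
    hca (Iio_mem_nhds (by linarith))
  have h2 : ∀ᶠ y in 𝓝 x₀, y ∈ interior {y : Euc n | 0 < f y} :=
    isOpen_interior.mem_nhds hx₀
  obtain ⟨ε, hε, hball⟩ := Metric.mem_nhds_iff.mp (h1.and h2)
  refine ⟨x₀, ε, Real.exp (-(phiR f x₀ + 1)), hε, Real.exp_pos _, fun y hy => ?_⟩
  obtain ⟨hy1, hy2⟩ := hball hy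
  have hfy : 0 < f y := (interior_subset hy2 : y ∈ {y : Euc n | 0 < f y})
  have := Real.exp_le_exp.mpr (neg_le_neg hy1.le)
  rwa [f_eq_exp hfy] at this

lemma exists_bound {f : Euc n → ℝ} (hlc : IsLogConcave f) (husc : UpperSemicontinuous f)
    (hpos : 0 < ∫⁻ x, ENNReal.ofReal (f x)) (hfin : (∫⁻ x, ENNReal.ofReal (f x)) < ⊤) :
    ∃ B : ℝ, 0 < B ∧ ∀ z, f z ≤ B := by
  obtain ⟨x₀, r₀, c, hr₀, hc, hball⟩ := exists_ball_le hlc hpos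
  set I := ∫⁻ x, ENNReal.ofReal (f x) with hI
  set Vol := volume (Metric.ball (0 : Euc n) (r₀ / 2)) with hVol
  have hVpos : 0 < Vol := Metric.measure_ball_pos _ _ (by positivity)
  have hVfin : Vol < ⊤ := measure_ball_lt_top
  set D := (I / Vol).toReal with hD
  refine ⟨max 1 ((D / c ^ ((1:ℝ)/2)) ^ 2), lt_of_lt_of_le one_pos (le_max_left _ _), fun z => ?_⟩
  -- pointwise lower bound on a ball
  have hkey : ∀ w ∈ Metric.ball (((1:ℝ)/2) • (x₀ + z)) (r₀ / 2),
      c ^ ((1:ℝ)/2) * f z ^ ((1:ℝ)/2) ≤ f w := by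
    intro w hw
    set b := (2:ℝ) • w - z with hb
    have hbmem : b ∈ Metric.ball x₀ r₀ := by
      rw [mem_ball_iff_norm]
      have : b - x₀ = (2:ℝ) • (w - ((1:ℝ)/2) • (x₀ + z)) := by
        rw [hb]; module
      rw [this, norm_smul]
      rw [mem_ball_iff_norm] at hw
      simp only [Real.norm_ofNat]
      nlinarith [hw]
    have hcomb := hlc.2 b z ((1:ℝ)/2) (by norm_num) (by norm_num)
    have h12 : (1:ℝ) - 1/2 = 1/2 := by norm_num
    rw [h12] at hcomb
    have hbw : ((1:ℝ)/2) • b + ((1:ℝ)/2) • z = w := by rw [hb]; module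
    rw [hbw] at hcomb
    refine le_trans ?_ hcomb
    exact mul_le_mul_of_nonneg_right
      (Real.rpow_le_rpow hc.le (hball b hbmem) (by norm_num))
      (Real.rpow_nonneg (hlc.1 z) _)
  -- integral lower bound
  have hint : ENNReal.ofReal (c ^ ((1:ℝ)/2) * f z ^ ((1:ℝ)/2)) * Vol ≤ I := by
    have hVc : volume (Metric.ball (((1:ℝ)/2) • (x₀ + z)) (r₀ / 2)) = Vol := by
      rw [hVol]; exact Measure.addHaar_ball_center volume _ _
    calc ENNReal.ofReal (c ^ ((1:ℝ)/2) * f z ^ ((1:ℝ)/2)) * Vol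
        = ∫⁻ _ in Metric.ball (((1:ℝ)/2) • (x₀ + z)) (r₀ / 2),
            ENNReal.ofReal (c ^ ((1:ℝ)/2) * f z ^ ((1:ℝ)/2)) := by
          rw [setLIntegral_const, hVc]
      _ ≤ ∫⁻ w in Metric.ball (((1:ℝ)/2) • (x₀ + z)) (r₀ / 2), ENNReal.ofReal (f w) := by
          apply setLIntegral_mono (ENNReal.measurable_ofReal.comp husc.measurable)
          intro w hw
          exact ENNReal.ofReal_le_ofReal (hkey w hw)
      _ ≤ I := setLIntegral_le_lintegral _ _
  have hfD : c ^ ((1:ℝ)/2) * f z ^ ((1:ℝ)/2) ≤ D := by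
    have h1 : ENNReal.ofReal (c ^ ((1:ℝ)/2) * f z ^ ((1:ℝ)/2)) ≤ I / Vol :=
      (ENNReal.le_div_iff_mul_le (Or.inl hVpos.ne') (Or.inl hVfin.ne)).mpr hint
    have h2 : I / Vol ≠ ⊤ := (ENNReal.div_lt_top hfin.ne hVpos.ne').ne
    exact (ENNReal.ofReal_le_iff_le_toReal h2).mp h1
  have hcpos : 0 < c ^ ((1:ℝ)/2) := Real.rpow_pos_of_pos hc _
  have h3 : f z ^ ((1:ℝ)/2) ≤ D / c ^ ((1:ℝ)/2) := by
    rw [le_div_iff₀ hcpos]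
    linarith [hfD]
  have h4 : f z = (f z ^ ((1:ℝ)/2)) ^ 2 := by
    rw [← Real.rpow_natCast (f z ^ ((1:ℝ)/2)) 2, ← Real.rpow_mul (hlc.1 z)]
    norm_num
  refine le_max_of_le_right ?_
  rw [h4]
  exact pow_le_pow_left₀ (Real.rpow_nonneg (hlc.1 z) _) h3 2

lemma pert_eq_top {f v : Euc n → ℝ} {M B : ℝ} (hf0 : ∀ y, 0 ≤ f y) (hlc : IsLogConcave f)
    (hv : ∀ y, |v y| ≤ M) (hB : 0 < B) (hfB : ∀ z, f z ≤ B) (hz : ∃ z, 0 < f z)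
    {x : Euc n} (hx : x ∉ closure {y : Euc n | 0 < f y}) (t : ℝ) :
    legendre (pertFn f v t) x = ⊤ := by
  obtain ⟨l, s, hls, hsx⟩ := geometric_hahn_banach_closed_point
      (convex_pos hlc).closure isClosed_closure hx
  set u := (InnerProductSpace.toDual ℝ (Euc n)).symm l with hu
  have huw : ∀ w, (inner ℝ u w : ℝ) = l w := fun w => InnerProductSpace.toDual_symm_apply
  have hsupp : ∀ c : ℝ, 0 ≤ c → suppFn f (c • u) ≤ ((c * s + Real.log B : ℝ) : EReal) := by
    intro c hc
    refine iSup_le fun z => ?_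
    by_cases hz' : f z = 0
    · simp only [negLog, hz', if_pos, EReal.sub_top]
      exact bot_le
    · have hzpos : 0 < f z := lt_of_le_of_ne (hf0 z) (Ne.symm hz')
      rw [negLog_eq hz', ← EReal.coe_sub, EReal.coe_le_coe_iff]
      have h1 : (inner ℝ (c • u) z : ℝ) = c * l z := by
        rw [real_inner_smul_left, huw]
      have h2 : l z ≤ s := (hls z (subset_closure hzpos)).le
      have h3 : Real.log (f z) ≤ Real.log B := Real.log_le_log hzpos (hfB z)
      simp only [phiR]
      rw [h1]
      nlinarith [mul_le_mul_of_nonneg_left h2 hc]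
  have key : ∀ ρ : ℝ, (ρ : EReal) ≤ legendre (pertFn f v t) x := by
    intro ρ
    set d := l x - s with hd
    have hdpos : 0 < d := sub_pos.mpr hsx
    obtain ⟨c, hc0, hcr⟩ : ∃ c : ℝ, 0 ≤ c ∧ ρ ≤ c * d - Real.log B - |t| * M := by
      refine ⟨max 0 ((ρ + Real.log B + |t| * M) / d), le_max_left _ _, ?_⟩
      have h5 : (ρ + Real.log B + |t| * M) / d ≤ max 0 ((ρ + Real.log B + |t| * M) / d) :=
        le_max_right _ _
      have h6 := mul_le_mul_of_nonneg_right h5 hdpos.le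
      rw [div_mul_cancel₀ _ hdpos.ne'] at h6
      linarith
    -- the support function at c • u is real
    have htop : suppFn f (c • u) ≠ ⊤ := by
      intro h
      have h' := hsupp c hc0
      rw [h, top_le_iff] at h'
      exact EReal.coe_ne_top _ h'
    have hbot : suppFn f (c • u) ≠ ⊥ := suppFn_ne_bot hz _
    obtain ⟨r, hr⟩ : ∃ r : ℝ, suppFn f (c • u) = (r : EReal) :=
      ⟨(suppFn f (c • u)).toReal, (EReal.coe_toReal htop hbot).symm⟩
    have hrle : r ≤ c * s + Real.log B := by
      have h' := hsupp c hc0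
      rw [hr, EReal.coe_le_coe_iff] at h'
      exact h'
    have hterm := le_iSup (fun y => ((inner ℝ x y : ℝ) : EReal) - pertFn f v t y) (c • u)
    have hpert : pertFn f v t (c • u) = ((r + t * v (c • u) : ℝ) : EReal) := by
      rw [pertFn, hr, ← EReal.coe_add]
    rw [hpert, ← EReal.coe_sub] at hterm
    refine le_trans ?_ hterm
    rw [EReal.coe_le_coe_iff]
    have hixcu : (inner ℝ x (c • u) : ℝ) = c * l x := by
      rw [real_inner_comm, real_inner_smul_left, huw]
    have h7 : t * v (c • u) ≤ |t| * M := by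
      have h8 : |t * v (c • u)| ≤ |t| * M := by
        rw [abs_mul]; exact mul_le_mul_of_nonneg_left (hv _) (abs_nonneg t)
      exact (le_abs_self _).trans h8
    have h9 : c * d = c * l x - c * s := by rw [hd]; ring
    rw [hixcu]
    linarith [hcr, hrle, h7, h9]
  by_contra htop
  have hbot : legendre (pertFn f v t) x ≠ ⊥ := by
    intro h
    have := key 0
    rw [h, le_bot_iff] at this
    exact EReal.coe_ne_bot _ this
  obtain ⟨r, hr⟩ : ∃ r : ℝ, legendre (pertFn f v t) x = (r : EReal) :=
    ⟨(legendre (pertFn f v t) x).toReal, (EReal.coe_toReal htop hbot).symm⟩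
  have := key (r + 1)
  rw [hr, EReal.coe_le_coe_iff] at this
  linarith


lemma gradient_inner_eq (g : Euc n → ℝ) (x w : Euc n) :
    (inner ℝ (gradient g x) w : ℝ) = fderiv ℝ g x w :=
  InnerProductSpace.toDual_symm_apply

lemma hasDerivAt_line {f : Euc n → ℝ} {x : Euc n}
    (hd : DifferentiableAt ℝ (phiR f) x) (w : Euc n) :
    HasDerivAt (fun s : ℝ => phiR f (x + s • w)) (inner ℝ (gradient (phiR f) x) w : ℝ) 0 := by
  have h1 : HasDerivAt (fun s : ℝ => x + s • w) w 0 := by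
    simpa using ((hasDerivAt_id (0:ℝ)).smul_const w).const_add x
  have h0 : x + (0:ℝ) • w = x := by simp
  have h2 : HasFDerivAt (phiR f) (fderiv ℝ (phiR f) x) ((fun s : ℝ => x + s • w) 0) := by
    simpa [h0] using hd.hasFDerivAt
  have h3 := h2.comp_hasDerivAt 0 h1
  rw [gradient_inner_eq]
  exact h3

lemma subgrad {f : Euc n → ℝ} {x : Euc n} (hlc : IsLogConcave f)
    (hx : x ∈ interior {y : Euc n | 0 < f y}) (hd : DifferentiableAt ℝ (phiR f) x) :
    ∀ z, 0 < f z → (inner ℝ (gradient (phiR f) x) (z - x) : ℝ) ≤ phiR f z - phiR f x := by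
  intro z hz
  have hxK : 0 < f x := (interior_subset hx : x ∈ {y : Euc n | 0 < f y})
  set g : ℝ → ℝ := fun s => phiR f (x + s • (z - x)) with hg
  have hline := hasDerivAt_line hd (z - x)
  have hslope : ∀ᶠ s in 𝓝[>] (0:ℝ), slope g 0 s ≤ phiR f z - phiR f x := by
    filter_upwards [Ioc_mem_nhdsGT_of_mem (Set.left_mem_Ico.mpr one_pos)] with s hs
    have h1 : x + s • (z - x) = (1 - s) • x + s • z := by module
    have h2 := (convexOn_phiR hlc).2 (interior_subset hx) hz
      (by linarith [hs.2] : (0:ℝ) ≤ 1 - s) hs.1.le (by ring)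
    rw [slope_def_field]
    have hg0 : g 0 = phiR f x := by simp [hg]
    have hgs : g s ≤ (1 - s) * phiR f x + s * phiR f z := by
      rw [hg]; simp only; rw [h1]; simpa [smul_eq_mul] using h2
    rw [hg0, sub_zero, div_le_iff₀ hs.1]
    nlinarith [hgs]
  have htend : Tendsto (slope g 0) (𝓝[>] (0:ℝ))
      (𝓝 (inner ℝ (gradient (phiR f) x) (z - x) : ℝ)) :=
    (hasDerivAt_iff_tendsto_slope.mp hline).mono_left
      (nhdsWithin_mono 0 (fun s hs => ne_of_gt hs))
  exact le_of_tendsto htend hslope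

lemma uniq_subgrad {f : Euc n → ℝ} {x : Euc n}
    (hx : x ∈ interior {y : Euc n | 0 < f y}) (hd : DifferentiableAt ℝ (phiR f) x)
    {y' : Euc n} (h : ∀ z, 0 < f z → (inner ℝ y' (z - x) : ℝ) ≤ phiR f z - phiR f x) :
    y' = gradient (phiR f) x := by
  have key : ∀ w : Euc n, (inner ℝ y' w : ℝ) ≤ inner ℝ (gradient (phiR f) x) w := by
    intro w
    obtain ⟨ε, hε, hball⟩ := Metric.isOpen_iff.mp isOpen_interior x hx
    set s₀ := ε / (‖w‖ + 1) with hs₀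
    have hs₀pos : 0 < s₀ := by
      apply div_pos hε; positivity
    have hev : ∀ᶠ s in 𝓝[>] (0:ℝ),
        (inner ℝ y' w : ℝ) ≤ slope (fun s : ℝ => phiR f (x + s • w)) 0 s := by
      filter_upwards [Ioo_mem_nhdsGT_of_mem (Set.left_mem_Ico.mpr hs₀pos)] with s hs
      have hsw : ‖s • w‖ < ε := by
        rw [norm_smul, Real.norm_eq_abs, abs_of_pos hs.1]
        calc s * ‖w‖ ≤ s * (‖w‖ + 1) := by nlinarith [hs.1]
          _ < s₀ * (‖w‖ + 1) := by
              have : (0:ℝ) < ‖w‖ + 1 := by positivity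
              nlinarith [hs.2]
          _ = ε := by rw [hs₀]; field_simp
      have hz : x + s • w ∈ interior {y : Euc n | 0 < f y} := by
        apply hball
        rw [Metric.mem_ball, dist_eq_norm]
        simpa using hsw
      have hfz : 0 < f (x + s • w) := (interior_subset hz : _ ∈ {y : Euc n | 0 < f y})
      have hineq := h (x + s • w) hfz
      rw [add_sub_cancel_left, real_inner_smul_right] at hineq
      rw [slope_def_field, sub_zero, le_div_iff₀ hs.1]
      have h0 : phiR f (x + (0:ℝ) • w) = phiR f x := by simp
      rw [h0]
      linarith [hineq]
    have htend : Tendsto (slope (fun s : ℝ => phiR f (x + s • w)) 0) (𝓝[>] (0:ℝ))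
        (𝓝 (inner ℝ (gradient (phiR f) x) w : ℝ)) :=
      (hasDerivAt_iff_tendsto_slope.mp (hasDerivAt_line hd w)).mono_left
        (nhdsWithin_mono 0 (fun s hs => ne_of_gt hs))
    exact ge_of_tendsto htend hev
  have h2 := key (y' - gradient (phiR f) x)
  have h3 : (inner ℝ (y' - gradient (phiR f) x) (y' - gradient (phiR f) x) : ℝ) ≤ 0 := by
    rw [inner_sub_left]; linarith
  have h4 : y' - gradient (phiR f) x = 0 := real_inner_self_nonpos.mp h3
  rw [sub_eq_zero] at h4
  exact h4

lemma feq {f : Euc n → ℝ} {x : Euc n} (hlc : IsLogConcave f)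
    (hx : x ∈ interior {y : Euc n | 0 < f y}) (hd : DifferentiableAt ℝ (phiR f) x) :
    suppFn f (gradient (phiR f) x) =
      (((inner ℝ x (gradient (phiR f) x) : ℝ) - phiR f x : ℝ) : EReal) := by
  set y₀ := gradient (phiR f) x with hy₀
  have hxK : 0 < f x := (interior_subset hx : x ∈ {y : Euc n | 0 < f y})
  apply le_antisymm
  · refine iSup_le fun z => ?_
    by_cases hz : f z = 0
    · simp only [negLog, hz, if_pos, EReal.sub_top]
      exact bot_le
    · have hzpos : 0 < f z := lt_of_le_of_ne (hlc.1 z) (Ne.symm hz)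
      rw [negLog_eq hz, ← EReal.coe_sub, EReal.coe_le_coe_iff]
      have hsg := subgrad hlc hx hd z hzpos
      rw [inner_sub_right] at hsg
      have hc1 : (inner ℝ y₀ x : ℝ) = inner ℝ x y₀ := real_inner_comm _ _
      have hc2 : (inner ℝ y₀ z : ℝ) = inner ℝ z y₀ := real_inner_comm _ _
      linarith
  · have h := le_suppFn hxK y₀
    have hc : (inner ℝ y₀ x : ℝ) = inner ℝ x y₀ := real_inner_comm _ _
    rwa [hc] at h

lemma near {f : Euc n → ℝ} {x : Euc n} (hlc : IsLogConcave f)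
    (hx : x ∈ interior {y : Euc n | 0 < f y}) (hd : DifferentiableAt ℝ (phiR f) x)
    {ρ : ℝ} (hρ : 0 < ρ) :
    ∃ δ : ℝ, 0 < δ ∧ ∀ y, suppFn f y ≠ ⊤ → ρ ≤ dist y (gradient (phiR f) x) →
      (inner ℝ x y : ℝ) - (suppFn f y).toReal ≤ phiR f x - δ := by
  set y₀ := gradient (phiR f) x with hy₀
  have hxK : 0 < f x := (interior_subset hx : x ∈ {y : Euc n | 0 < f y})
  by_contra hcon
  push_neg at hcon
  have hseq : ∀ k : ℕ, ∃ y, suppFn f y ≠ ⊤ ∧ ρ ≤ dist y y₀ ∧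
      phiR f x - 1/((k:ℝ)+1) < (inner ℝ x y : ℝ) - (suppFn f y).toReal := by
    intro k
    obtain ⟨y, h1, h2, h3⟩ := hcon (1/((k:ℝ)+1)) (by positivity)
    exact ⟨y, h1, h2, by linarith⟩
  choose Y hY1 hY2 hY3 using hseq
  -- a closed ball around x inside the interior
  obtain ⟨ε, hε, hball⟩ := Metric.isOpen_iff.mp isOpen_interior x hx
  set r := ε / 4 with hr
  have hrpos : 0 < r := by positivity
  have hball2 : Metric.closedBall x (2*r) ⊆ interior {y : Euc n | 0 < f y} := by
    intro w hw
    apply hball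
    rw [Metric.mem_closedBall] at hw
    rw [Metric.mem_ball]
    calc dist w x ≤ 2*r := hw
      _ < ε := by rw [hr]; linarith
  have hballr : Metric.closedBall x r ⊆ interior {y : Euc n | 0 < f y} :=
    (Metric.closedBall_subset_closedBall (by linarith)).trans hball2
  obtain ⟨C, hC⟩ : ∃ C, ∀ w ∈ Metric.closedBall x r, ‖phiR f w‖ ≤ C :=
    (isCompact_closedBall x r).exists_bound_of_continuousOn
      ((continuousOn_phiR hlc).mono hballr)
  -- coercivity
  have hcoer : ∀ y, suppFn f y ≠ ⊤ →
      (inner ℝ x y : ℝ) - (suppFn f y).toReal ≤ C - r * ‖y‖ := by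
    intro y hy
    by_cases hy0 : y = 0
    · subst hy0
      have hfen := fenchel hxK hy
      have hxb : x ∈ Metric.closedBall x r := Metric.mem_closedBall_self hrpos.le
      have := hC x hxb
      rw [Real.norm_eq_abs] at this
      have h2 : phiR f x ≤ C := (abs_le.mp this).2
      simp only [norm_zero, mul_zero, sub_zero]
      linarith
    · set x' := x + (r / ‖y‖) • y with hx'
      have hny : 0 < ‖y‖ := norm_pos_iff.mpr hy0
      have hx'mem : x' ∈ Metric.closedBall x r := by
        rw [Metric.mem_closedBall, dist_eq_norm, hx']
        have : x + (r / ‖y‖) • y - x = (r / ‖y‖) • y := by abel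
        rw [this, norm_smul, Real.norm_eq_abs, abs_of_pos (by positivity)]
        rw [div_mul_cancel₀ _ hny.ne']
      have hfx' : 0 < f x' :=
        (interior_subset (hballr hx'mem) : x' ∈ {y : Euc n | 0 < f y})
      have hfen := fenchel hfx' hy
      have hix' : (inner ℝ x' y : ℝ) = inner ℝ x y + r * ‖y‖ := by
        rw [hx', inner_add_left, real_inner_smul_left, real_inner_self_eq_norm_sq]
        field_simp
      have hphi : phiR f x' ≤ C := by
        have := hC x' hx'mem
        rw [Real.norm_eq_abs] at this
        exact (abs_le.mp this).2
      rw [hix'] at hfen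
      linarith
  -- the sequence is bounded
  set R := (C - phiR f x + 1) / r with hR
  have hbound : ∀ k, ‖Y k‖ ≤ R := by
    intro k
    have h1 := hcoer (Y k) (hY1 k)
    have h2 := hY3 k
    have h3 : 1/((k:ℝ)+1) ≤ 1 := by
      rw [div_le_one (by positivity)]
      linarith [Nat.cast_nonneg (α := ℝ) k]
    rw [hR, le_div_iff₀ hrpos]
    nlinarith
  obtain ⟨y', hy'mem, φk, hφmono, hφtend⟩ :=
    (isCompact_closedBall (0 : Euc n) R).tendsto_subseq
      (fun k => mem_closedBall_zero_iff.mpr (hbound k))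
  -- the limit satisfies the subgradient inequality
  have hdist : ρ ≤ dist y' y₀ := by
    have ht : Tendsto (fun k => dist (Y (φk k)) y₀) atTop (𝓝 (dist y' y₀)) :=
      hφtend.dist tendsto_const_nhds
    exact ge_of_tendsto ht (Eventually.of_forall fun k => hY2 (φk k))
  have hsub : ∀ z, 0 < f z →
      (inner ℝ y' z : ℝ) - phiR f z ≤ (inner ℝ x y' : ℝ) - phiR f x := by
    intro z hz
    have hk : ∀ k, (inner ℝ (Y (φk k)) z : ℝ) - phiR f z ≤
        (inner ℝ x (Y (φk k)) : ℝ) - phiR f x + 1/((φk k : ℝ)+1) := by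
      intro k
      have hle := le_suppFn hz (Y (φk k))
      have h1 : (inner ℝ (Y (φk k)) z : ℝ) - phiR f z ≤ (suppFn f (Y (φk k))).toReal := by
        have := EReal.toReal_le_toReal hle (EReal.coe_ne_bot _) (hY1 _)
        rwa [EReal.toReal_coe] at this
      have h2 := (hY3 (φk k)).le
      linarith
    have t1 : Tendsto (fun k => (inner ℝ (Y (φk k)) z : ℝ) - phiR f z) atTop
        (𝓝 ((inner ℝ y' z : ℝ) - phiR f z)) :=
      (hφtend.inner tendsto_const_nhds).sub_const _
    have t2 : Tendsto (fun k => (inner ℝ x (Y (φk k)) : ℝ) - phiR f x + 1/((φk k : ℝ)+1)) atTop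
        (𝓝 ((inner ℝ x y' : ℝ) - phiR f x + 0)) := by
      apply Tendsto.add
      · exact (Tendsto.inner tendsto_const_nhds hφtend).sub_const _
      · exact tendsto_one_div_add_atTop_nhds_zero_nat.comp hφmono.tendsto_atTop
    have := le_of_tendsto_of_tendsto' t1 t2 hk
    rwa [add_zero] at this
  have hsub' : ∀ z, 0 < f z → (inner ℝ y' (z - x) : ℝ) ≤ phiR f z - phiR f x := by
    intro z hz
    have h1 := hsub z hz
    rw [inner_sub_right]
    have hc : (inner ℝ y' x : ℝ) = inner ℝ x y' := real_inner_comm _ _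
    linarith
  have := uniq_subgrad hx hd hsub'
  rw [this] at hdist
  rw [dist_self] at hdist
  linarith


section PW

variable {f v : Euc n → ℝ} {M : ℝ} {x : Euc n}

lemma pert_lower (hlc : IsLogConcave f)
    (hx : x ∈ interior {y : Euc n | 0 < f y}) (hd : DifferentiableAt ℝ (phiR f) x) (t : ℝ) :
    ((phiR f x - t * v (gradient (phiR f) x) : ℝ) : EReal) ≤ legendre (pertFn f v t) x := by
  set y₀ := gradient (phiR f) x with hy₀
  have hxK : 0 < f x := (interior_subset hx : x ∈ {y : Euc n | 0 < f y})
  have hfeq := feq hlc hx hd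
  have htop : suppFn f y₀ ≠ ⊤ := by rw [hfeq]; exact EReal.coe_ne_top _
  have htr : (suppFn f y₀).toReal = (inner ℝ x y₀ : ℝ) - phiR f x := by
    rw [hfeq, EReal.toReal_coe]
  have h := le_pert (v := v) htop ⟨x, hxK⟩ t x
  rw [htr] at h
  convert h using 2
  ring

lemma pert_toReal (hlc : IsLogConcave f)
    (hv : ∀ y, |v y| ≤ M)
    (hx : x ∈ interior {y : Euc n | 0 < f y}) (hd : DifferentiableAt ℝ (phiR f) x) (t : ℝ) :
    legendre (pertFn f v t) x = (((legendre (pertFn f v t) x).toReal : ℝ) : EReal) ∧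
    phiR f x - t * v (gradient (phiR f) x) ≤ (legendre (pertFn f v t) x).toReal ∧
    (legendre (pertFn f v t) x).toReal ≤ phiR f x + |t| * M := by
  have hxK : 0 < f x := (interior_subset hx : x ∈ {y : Euc n | 0 < f y})
  exact real_of_bounds (pert_lower hlc hx hd t) (pert_le hv hxK ⟨x, hxK⟩ t)

lemma fine_upper (hlc : IsLogConcave f) (hv : ∀ y, |v y| ≤ M) (hvc : Continuous v)
    (hx : x ∈ interior {y : Euc n | 0 < f y}) (hd : DifferentiableAt ℝ (phiR f) x)
    {ε : ℝ} (hε : 0 < ε) :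
    ∃ δ : ℝ, 0 < δ ∧ ∀ t : ℝ, |t| < δ → legendre (pertFn f v t) x ≤
      ((phiR f x - t * v (gradient (phiR f) x) + ε * |t| : ℝ) : EReal) := by
  set y₀ := gradient (phiR f) x with hy₀
  have hxK : 0 < f x := (interior_subset hx : x ∈ {y : Euc n | 0 < f y})
  have hM0 : 0 ≤ M := (abs_nonneg (v 0)).trans (hv 0)
  obtain ⟨ρ, hρ, hρv⟩ := Metric.continuousAt_iff.mp hvc.continuousAt ε hε
  obtain ⟨δ₀, hδ₀, hnear⟩ := near hlc hx hd hρ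
  refine ⟨δ₀ / (2*M+1), by positivity, fun t ht => ?_⟩
  refine iSup_le fun y => ?_
  by_cases hy : suppFn f y = ⊤
  · rw [pertFn]
    simp only [hy, EReal.top_add_coe, EReal.sub_top]
    exact bot_le
  · obtain ⟨r, hr⟩ : ∃ r : ℝ, suppFn f y = (r : EReal) :=
      ⟨(suppFn f y).toReal, (EReal.coe_toReal hy (suppFn_ne_bot ⟨x, hxK⟩ y)).symm⟩
    have htr : (suppFn f y).toReal = r := by rw [hr, EReal.toReal_coe]
    have hrepr : pertFn f v t y = ((r + t * v y : ℝ) : EReal) := by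
      rw [pertFn, hr, ← EReal.coe_add]
    rw [hrepr, ← EReal.coe_sub, EReal.coe_le_coe_iff]
    by_cases hyy : dist y y₀ < ρ
    · -- near the gradient
      have hfen := fenchel hxK hy
      rw [htr] at hfen
      have hvv : |v y - v y₀| < ε := by
        have := hρv hyy
        rwa [Real.dist_eq] at this
      have h1 : -(t * v y) ≤ -(t * v y₀) + |t| * ε := by
        have heq : -(t * v y) + t * v y₀ = -(t * (v y - v y₀)) := by ring
        have h2 : |t * (v y - v y₀)| ≤ |t| * ε := by
          rw [abs_mul]
          exact mul_le_mul_of_nonneg_left hvv.le (abs_nonneg t)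
        have h3 := neg_abs_le (t * (v y - v y₀))
        linarith
      linarith
    · -- far from the gradient
      push_neg at hyy
      have hfar := hnear y hy hyy
      rw [htr] at hfar
      have h1 : -(t * v y) ≤ |t| * M := by
        have h2 : |t * v y| ≤ |t| * M := by
          rw [abs_mul]; exact mul_le_mul_of_nonneg_left (hv y) (abs_nonneg t)
        have := neg_abs_le (t * v y)
        linarith
      have h2 : -(t * v y₀) ≥ -(|t| * M) := by
        have h3 : |t * v y₀| ≤ |t| * M := by
          rw [abs_mul]; exact mul_le_mul_of_nonneg_left (hv y₀) (abs_nonneg t)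
        have := le_abs_self (t * v y₀)
        linarith
      have h4 : |t| * (2*M+1) < δ₀ := by
        have := (lt_div_iff₀ (by positivity : (0:ℝ) < 2*M+1)).mp ht
        nlinarith [abs_nonneg t]
      have h5 : 0 ≤ ε * |t| := mul_nonneg hε.le (abs_nonneg t)
      linarith [abs_nonneg t]

lemma derivA (hlc : IsLogConcave f) (hv : ∀ y, |v y| ≤ M) (hvc : Continuous v)
    (hx : x ∈ interior {y : Euc n | 0 < f y}) (hd : DifferentiableAt ℝ (phiR f) x) :
    HasDerivAt (fun t : ℝ => (legendre (pertFn f v t) x).toReal)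
      (-(v (gradient (phiR f) x))) 0 := by
  set y₀ := gradient (phiR f) x with hy₀
  set A : ℝ → ℝ := fun t => (legendre (pertFn f v t) x).toReal with hA
  have hsand := fun t => pert_toReal hlc hv hx hd t
  have hA0 : A 0 = phiR f x := by
    have h := hsand 0
    simp only [zero_mul, sub_zero, abs_zero] at h
    have h1 := h.2.1
    have h2 := h.2.2
    simp only [hA]
    linarith
  rw [hasDerivAt_iff_isLittleO]
  rw [Asymptotics.isLittleO_iff]
  intro c hc
  obtain ⟨δ, hδ, hfine⟩ := fine_upper hlc hv hvc hx hd hc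
  have hev : ∀ᶠ t : ℝ in 𝓝 0, |t| < δ := by
    have := Metric.ball_mem_nhds (0:ℝ) hδ
    filter_upwards [this] with t ht
    rwa [Metric.mem_ball, Real.dist_eq, sub_zero] at ht
  filter_upwards [hev] with t ht
  have hlow := (hsand t).2.1
  have hup : A t ≤ phiR f x - t * v y₀ + c * |t| := by
    have h := hfine t ht
    rw [(hsand t).1, EReal.coe_le_coe_iff] at h
    exact h
  have habs : |A t - A 0 - (t - 0) * (-(v y₀))| ≤ c * |t| := by
    rw [hA0]
    rw [abs_le]
    constructor
    · have : 0 ≤ c * |t| := mul_nonneg hc.le (abs_nonneg t)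
      nlinarith [hlow]
    · nlinarith [hup]
  calc ‖A t - A 0 - (t - 0) • (-(v y₀))‖ = |A t - A 0 - (t - 0) * (-(v y₀))| := by
        rw [Real.norm_eq_abs]; norm_num
    _ ≤ c * |t| := habs
    _ = c * ‖t - 0‖ := by rw [Real.norm_eq_abs, sub_zero]

lemma lipA (hv : ∀ y, |v y| ≤ M) (hxK : 0 < f x) (h0 : suppFn f 0 ≠ ⊤) :
    ∀ s t : ℝ, (legendre (pertFn f v t) x).toReal ≤
      (legendre (pertFn f v s) x).toReal + M * |t - s| := by
  have hz : ∃ z, 0 < f z := ⟨x, hxK⟩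
  intro s t
  have hsand : ∀ u : ℝ, legendre (pertFn f v u) x = (((legendre (pertFn f v u) x).toReal : ℝ) : EReal) := by
    intro u
    exact (real_of_bounds (le_pert (v := v) h0 hz u x) (pert_le hv hxK hz u)).1
  set As := (legendre (pertFn f v s) x).toReal with hAs
  have hle : legendre (pertFn f v t) x ≤ ((As + M * |t - s| : ℝ) : EReal) := by
    refine iSup_le fun y => ?_
    by_cases hy : suppFn f y = ⊤
    · rw [pertFn]
      simp only [hy, EReal.top_add_coe, EReal.sub_top]
      exact bot_le
    · obtain ⟨r, hr⟩ : ∃ r : ℝ, suppFn f y = (r : EReal) :=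
        ⟨(suppFn f y).toReal, (EReal.coe_toReal hy (suppFn_ne_bot hz y)).symm⟩
      have htr : (suppFn f y).toReal = r := by rw [hr, EReal.toReal_coe]
      have hreprt : pertFn f v t y = ((r + t * v y : ℝ) : EReal) := by
        rw [pertFn, hr, ← EReal.coe_add]
      rw [hreprt, ← EReal.coe_sub, EReal.coe_le_coe_iff]
      -- the s-term is at most As
      have hterm := le_pert (v := v) hy hz s x
      rw [htr] at hterm
      rw [hsand s, EReal.coe_le_coe_iff] at hterm
      have h1 : (s - t) * v y ≤ M * |t - s| := by
        have h2 : |(s - t) * v y| ≤ |s - t| * M := by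
          rw [abs_mul]
          exact mul_le_mul_of_nonneg_left (hv y) (abs_nonneg _)
        have h3 : |s - t| = |t - s| := abs_sub_comm s t
        have := le_abs_self ((s - t) * v y)
        rw [h3] at h2
        nlinarith
      have heq : (inner ℝ x y : ℝ) - (r + t * v y)
          = ((inner ℝ x y : ℝ) - r - s * v y) + (s - t) * v y := by ring
      rw [heq]
      have hAs' : (inner ℝ x y : ℝ) - r - s * v y ≤ As := hterm
      linarith
  rw [hsand t, EReal.coe_le_coe_iff] at hle
  exact hle

end PW

lemma ae_decomp {f : Euc n → ℝ} (hlc : IsLogConcave f) :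
    ∀ᵐ x : Euc n, (x ∈ interior {y : Euc n | 0 < f y} ∧ DifferentiableAt ℝ (phiR f) x)
      ∨ x ∉ closure {y : Euc n | 0 < f y} := by
  set K := {y : Euc n | 0 < f y} with hK
  have h1 : volume (frontier K) = 0 := (convex_pos hlc).addHaar_frontier volume
  have h2 : volume {x | x ∈ interior K ∧ ¬ DifferentiableAt ℝ (phiR f) x} = 0 := by
    apply measure_null_of_locally_null
    intro x hx
    have hll : LocallyLipschitzOn (interior K) (phiR f) :=
      (convexOn_phiR hlc).locallyLipschitzOn_interior
    obtain ⟨Kc, t, ht, hlip⟩ := hll hx.1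
    rw [nhdsWithin_eq_nhds.mpr (isOpen_interior.mem_nhds hx.1)] at ht
    obtain ⟨ε, hε, hball⟩ := Metric.mem_nhds_iff.mp ht
    refine ⟨{x' | x' ∈ interior K ∧ ¬ DifferentiableAt ℝ (phiR f) x'} ∩ Metric.ball x ε,
      inter_mem_nhdsWithin _ (Metric.ball_mem_nhds x hε), ?_⟩
    have hlipball : LipschitzOnWith Kc (phiR f) (Metric.ball x ε) := hlip.mono hball
    have hae := hlipball.ae_differentiableWithinAt_of_mem (μ := volume)
    rw [measure_eq_zero_iff_ae_notMem]
    filter_upwards [hae] with w hw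
    rintro ⟨⟨-, hnd⟩, hwball⟩
    exact hnd ((hw hwball).differentiableAt (Metric.isOpen_ball.mem_nhds hwball))
  have hcover : {x : Euc n | ¬ ((x ∈ interior K ∧ DifferentiableAt ℝ (phiR f) x)
      ∨ x ∉ closure K)} ⊆
      frontier K ∪ {x | x ∈ interior K ∧ ¬ DifferentiableAt ℝ (phiR f) x} := by
    intro x hx
    simp only [mem_setOf_eq, not_or, not_not] at hx
    obtain ⟨hnd, hcl⟩ := hx
    by_cases hi : x ∈ interior K
    · right
      refine ⟨hi, fun hdd => hnd ⟨hi, hdd⟩⟩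
    · left
      exact ⟨hcl, hi⟩
  rw [ae_iff]
  exact measure_mono_null hcover (measure_union_null h1 h2)


end S16

open S16 in
/-- for bounded continuous `v`, the two-sided derivative
`(d/dt)|_{t=0} ∫ e^{-(h_f + tv)*}` exists and equals `∫ v dS_f`. -/
theorem statement16 {n : ℕ} (f : Euc n → ℝ)
    (hlc : IsLogConcave f) (husc : UpperSemicontinuous f)
    (hpos : 0 < ∫⁻ x, ENNReal.ofReal (f x))
    (hfin : (∫⁻ x, ENNReal.ofReal (f x)) < ⊤)
    (v : Euc n → ℝ) (hvcont : Continuous v) (hvbdd : ∃ M : ℝ, ∀ y, |v y| ≤ M) :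
    HasDerivAt
      (fun t : ℝ =>
        (∫⁻ x, expNeg (legendre (fun y => suppFn f y + ((t * v y : ℝ) : EReal)) x)).toReal)
      (∫ x, v (negLogGrad f x) * f x) 0 := by
  obtain ⟨M, hv⟩ := hvbdd
  have hM0 : 0 ≤ M := (abs_nonneg (v 0)).trans (hv 0)
  have hz : ∃ z, 0 < f z := by
    by_contra h
    push_neg at h
    have hae : ∀ᵐ x : Euc n, ENNReal.ofReal (f x) = 0 :=
      ae_of_all _ fun x => by
        rw [ENNReal.ofReal_eq_zero]; exact h x
    rw [lintegral_congr_ae hae, lintegral_zero] at hpos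
    exact lt_irrefl _ hpos
  obtain ⟨B, hB, hfB⟩ := exists_bound hlc husc hpos hfin
  have h0top : suppFn f 0 ≠ ⊤ := by
    intro h
    have := suppFn_zero_le hlc.1 hB hfB
    rw [h, top_le_iff] at this
    exact EReal.coe_ne_top _ this
  have hfmeas : Measurable f := husc.measurable
  set F : ℝ → Euc n → ℝ := fun t x => (expNeg (legendre (pertFn f v t) x)).toReal with hF
  set F' : Euc n → ℝ := fun x => v (negLogGrad f x) * f x with hF'
  have hmeasF : ∀ t : ℝ, Measurable (fun x => expNeg (legendre (pertFn f v t) x)) :=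
    fun t => measurable_expNeg.comp (measurable_legendre _)
  have hne_bot : ∀ (t : ℝ) (x : Euc n), legendre (pertFn f v t) x ≠ ⊥ :=
    fun t x => pert_ne_bot h0top hz t x
  have hlt_top : ∀ (t : ℝ) (x : Euc n), expNeg (legendre (pertFn f v t) x) < ⊤ :=
    fun t x => lt_top_iff_ne_top.mpr (expNeg_ne_top (hne_bot t x))
  have hgoal : (fun t : ℝ =>
      (∫⁻ x, expNeg (legendre (fun y => suppFn f y + ((t * v y : ℝ) : EReal)) x)).toReal)
      = fun t => ∫ x, F t x := by
    funext t
    rw [show (fun y => suppFn f y + ((t * v y : ℝ) : EReal)) = pertFn f v t from rfl]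
    rw [← integral_toReal ((hmeasF t).aemeasurable) (ae_of_all _ (hlt_top t))]
  rw [hgoal]
  -- integral domination
  have hbnd : ∀ t : ℝ, |t| ≤ 1 → (∫⁻ x, expNeg (legendre (pertFn f v t) x)) ≤
      ENNReal.ofReal (Real.exp M) * ∫⁻ x, ENNReal.ofReal (f x) := by
    intro t ht
    rw [← lintegral_const_mul' _ _ ENNReal.ofReal_ne_top]
    apply lintegral_mono_ae
    filter_upwards [ae_decomp hlc] with x hx
    rcases hx with ⟨hxi, hxd⟩ | hxc
    · have hxK : 0 < f x := (interior_subset hxi : x ∈ {y : Euc n | 0 < f y})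
      have hlow := pert_lower (v := v) hlc hxi hxd t
      have h1 : ((phiR f x - M : ℝ) : EReal) ≤ legendre (pertFn f v t) x := by
        refine le_trans ?_ hlow
        rw [EReal.coe_le_coe_iff]
        have h2 : t * v (gradient (phiR f) x) ≤ |t| * M := by
          have h3 : |t * v (gradient (phiR f) x)| ≤ |t| * M := by
            rw [abs_mul]; exact mul_le_mul_of_nonneg_left (hv _) (abs_nonneg t)
          exact (le_abs_self _).trans h3
        nlinarith [abs_nonneg t]
      refine le_trans (antitone_expNeg h1) ?_
      rw [expNeg_coe]
      have h4 : Real.exp (-(phiR f x - M)) = Real.exp M * f x := by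
        rw [show -(phiR f x - M) = M + (-(phiR f x)) by ring, Real.exp_add, f_eq_exp hxK]
      rw [h4, ENNReal.ofReal_mul (Real.exp_nonneg M)]
    · rw [pert_eq_top hlc.1 hlc hv hB hfB hz hxc t, expNeg_top]
      exact zero_le
  have hfint : Integrable f := by
    refine ⟨hfmeas.aestronglyMeasurable, ?_⟩
    rw [hasFiniteIntegral_iff_ofReal (ae_of_all _ hlc.1)]
    exact hfin
  -- apply the dominated-derivative theorem
  have key := hasDerivAt_integral_of_dominated_loc_of_lip (μ := volume)
    (F := F) (F' := F') (x₀ := (0:ℝ)) (bound := fun x => Real.exp M * M * f x)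
    (Metric.ball_mem_nhds (0:ℝ) one_pos)
    (Eventually.of_forall fun t => (ENNReal.measurable_toReal.comp (hmeasF t)).aestronglyMeasurable)
    ?hFint ?hF'meas ?hlip ?hbint ?hdiff
  · exact key.2
  case hFint =>
    apply integrable_toReal_of_lintegral_ne_top (hmeasF 0).aemeasurable
    refine ((hbnd 0 (by norm_num)).trans_lt ?_).ne
    exact ENNReal.mul_lt_top ENNReal.ofReal_lt_top hfin
  case hF'meas =>
    have hgrad : Measurable (negLogGrad f) := by
      have : Measurable fun x => fderiv ℝ (phiR f) x := measurable_fderiv ℝ (phiR f)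
      exact ((InnerProductSpace.toDual ℝ (Euc n)).symm.continuous.measurable).comp this
    exact ((hvcont.measurable.comp hgrad).mul hfmeas).aestronglyMeasurable
  case hlip =>
    filter_upwards [ae_decomp hlc] with x hx
    have hKnn : (0:ℝ) ≤ Real.exp M * M * f x := by
      have := hlc.1 x; positivity
    rcases hx with ⟨hxi, hxd⟩ | hxc
    · have hxK : 0 < f x := (interior_subset hxi : x ∈ {y : Euc n | 0 < f y})
      set y₀ := gradient (phiR f) x with hy₀
      have hsand := fun t : ℝ => pert_toReal hlc hv hxi hxd t
      have hFx : ∀ t : ℝ, F t x = Real.exp (-((legendre (pertFn f v t) x).toReal)) := by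
        intro t
        rw [hF]
        simp only
        rw [(hsand t).1, expNeg_coe, ENNReal.toReal_ofReal (Real.exp_nonneg _)]
        rw [EReal.toReal_coe]
      apply LipschitzOnWith.of_dist_le_mul
      intro t ht s hs
      rw [Metric.mem_ball, Real.dist_eq, sub_zero] at ht hs
      rw [Real.dist_eq, Real.dist_eq, hFx t, hFx s]
      set At := (legendre (pertFn f v t) x).toReal
      set As := (legendre (pertFn f v s) x).toReal
      have hAbound : ∀ u : ℝ, |u| < 1 → -(((legendre (pertFn f v u) x).toReal)) ≤ M - phiR f x := by
        intro u hu
        have h1 := (hsand u).2.1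
        have h2 : u * v y₀ ≤ |u| * M := by
          have h3 : |u * v y₀| ≤ |u| * M := by
            rw [abs_mul]; exact mul_le_mul_of_nonneg_left (hv _) (abs_nonneg u)
          exact (le_abs_self _).trans h3
        nlinarith [abs_nonneg u]
      have hlip1 := lipA (x := x) hv hxK h0top s t
      have hlip2 := lipA (x := x) hv hxK h0top t s
      have hAts : |At - As| ≤ M * |t - s| := by
        rw [abs_le]
        constructor
        · have h5 : |s - t| = |t - s| := abs_sub_comm s t
          rw [h5] at hlip2
          linarith [hlip2]
        · linarith [hlip1]
      have hexp := abs_exp_sub_exp (-At) (-As)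
      have hmax : max (-At) (-As) ≤ M - phiR f x :=
        max_le (hAbound t ht) (hAbound s hs)
      have hexp2 : Real.exp (max (-At) (-As)) ≤ Real.exp M * f x := by
        have := Real.exp_le_exp.mpr hmax
        rwa [show M - phiR f x = M + (-(phiR f x)) by ring, Real.exp_add, f_eq_exp hxK] at this
      have habs : |(-At) - (-As)| = |At - As| := by
        rw [show (-At) - (-As) = -(At - As) by ring, abs_neg]
      rw [habs] at hexp
      calc |Real.exp (-At) - Real.exp (-As)|
          ≤ Real.exp (max (-At) (-As)) * |At - As| := hexp
        _ ≤ (Real.exp M * f x) * (M * |t - s|) := by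
            apply mul_le_mul hexp2 hAts (abs_nonneg _)
            positivity
        _ = (Real.exp M * M * f x) * |t - s| := by ring
        _ = ↑(Real.nnabs (Real.exp M * M * f x)) * dist t s := by
            rw [Real.dist_eq, Real.coe_nnabs, abs_of_nonneg hKnn]
    · have hF0 : ∀ t : ℝ, F t x = 0 := by
        intro t
        rw [hF]
        simp only
        rw [pert_eq_top hlc.1 hlc hv hB hfB hz hxc t, expNeg_top]
        simp
      apply LipschitzOnWith.of_dist_le_mul
      intro t _ s _
      rw [hF0 t, hF0 s, dist_self]
      positivity
  case hbint =>
    exact (hfint.const_mul (Real.exp M * M))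
  case hdiff =>
    filter_upwards [ae_decomp hlc] with x hx
    rcases hx with ⟨hxi, hxd⟩ | hxc
    · have hxK : 0 < f x := (interior_subset hxi : x ∈ {y : Euc n | 0 < f y})
      set y₀ := gradient (phiR f) x with hy₀
      have hsand := fun t : ℝ => pert_toReal hlc hv hxi hxd t
      have hFx : ∀ t : ℝ, F t x = Real.exp (-((legendre (pertFn f v t) x).toReal)) := by
        intro t
        rw [hF]
        simp only
        rw [(hsand t).1, expNeg_coe, ENNReal.toReal_ofReal (Real.exp_nonneg _)]
        rw [EReal.toReal_coe]
      have hA0 : (legendre (pertFn f v 0) x).toReal = phiR f x := by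
        have h := hsand 0
        simp only [zero_mul, sub_zero, abs_zero] at h
        have h1 := h.2.1
        have h2 := h.2.2
        linarith
      have hA := derivA hlc hv hvcont hxi hxd
      have h2 := (hA.neg).exp
      have hfun : (fun t : ℝ => F t x)
          = fun t : ℝ => Real.exp (-((legendre (pertFn f v t) x).toReal)) := funext hFx
      rw [hfun]
      have hval : Real.exp (-((legendre (pertFn f v 0) x).toReal)) * (v y₀) = F' x := by
        rw [hA0, f_eq_exp hxK, hF']
        simp only
        rw [mul_comm]
        rfl
      rw [← hval]
      simpa using h2
    · have hfx0 : f x = 0 := by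
        by_contra h
        exact hxc (subset_closure (lt_of_le_of_ne (hlc.1 x) (Ne.symm h)))
      have hF0 : ∀ t : ℝ, F t x = 0 := by
        intro t
        rw [hF]
        simp only
        rw [pert_eq_top hlc.1 hlc hv hB hfB hz hxc t, expNeg_top]
        simp
      have hfun : (fun t : ℝ => F t x) = fun _ : ℝ => (0:ℝ) := funext hF0
      have hval : F' x = 0 := by rw [hF']; simp [hfx0]
      rw [hfun, hval]
      exact hasDerivAt_const 0 0

end
end

section
/- Let ψ : ℝⁿ → (-∞,∞] and α : ℝⁿ → ℝ be lower semi-continuous with α bounded below (α ≥ -M), ψ(0), α(0) < ∞, and suppose φ = ψ* is differentiable at x₀. For t ∈ [0,1], let y_t be a maximizer of y ↦ ⟨x₀,y⟩ - ψ(y) - tα(y). Then such maximizers exist, the set {y_t : 0 ≤ t ≤ 1} is bounded, and y_t → y₀ = ∇φ(x₀) as t → 0⁺. -/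
open MeasureTheory Filter Topology Set
open scoped ENNReal NNReal

noncomputable section

variable {n : ℕ}

/-! ### Auxiliary lemmas for statement18 -/

theorem usc_exists_max {X : Type*} [TopologicalSpace X] {f : X → EReal}
    (hf : UpperSemicontinuous f) {K : Set X} (hK : IsCompact K) (hKc : IsClosed K)
    (hne : K.Nonempty) : ∃ y ∈ K, ∀ z ∈ K, f z ≤ f y := by
  have hne' : (f '' K).Nonempty := hne.image f
  haveI : Nonempty (f '' K) := hne'.to_subtype
  set Z : f '' K → Set X := fun a => K ∩ f ⁻¹' (Ici a.1) with hZ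
  have hdir : Directed (· ⊇ ·) Z := by
    rintro ⟨a, u, hu, rfl⟩ ⟨b, v, hv, rfl⟩
    rcases le_total (f u) (f v) with h | h
    · exact ⟨⟨f v, v, hv, rfl⟩, fun x hx => ⟨hx.1, le_trans h hx.2⟩, fun x hx => hx⟩
    · exact ⟨⟨f u, u, hu, rfl⟩, fun x hx => hx, fun x hx => ⟨hx.1, le_trans h hx.2⟩⟩
  have hZne : ∀ a, (Z a).Nonempty := by
    rintro ⟨a, u, hu, rfl⟩
    exact ⟨u, hu, by simp [Z]⟩
  have hZcl : ∀ a, IsClosed (Z a) := fun a => hKc.inter (hf.isClosed_preimage a.1)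
  have hZcp : ∀ a, IsCompact (Z a) := fun a => hK.of_isClosed_subset (hZcl a) inter_subset_left
  obtain ⟨y, hy⟩ := IsCompact.nonempty_iInter_of_directed_nonempty_isCompact_isClosed
    Z hdir hZne hZcp hZcl
  simp only [mem_iInter] at hy
  refine ⟨y, (hy ⟨f hne.choose, hne.choose, hne.choose_spec, rfl⟩).1, fun z hz => ?_⟩
  exact (hy ⟨f z, z, hz, rfl⟩).2

lemma er_shuffle (a c : ℝ) (b : EReal) : (a:EReal) - b - (c:EReal) = ((a - c:ℝ):EReal) - b := by
  induction b using EReal.rec with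
  | bot => rw [EReal.coe_sub_bot, EReal.top_sub_coe, EReal.coe_sub_bot]
  | coe r =>
      rw [← EReal.coe_sub, ← EReal.coe_sub, ← EReal.coe_sub, EReal.coe_eq_coe_iff]
      ring
  | top => simp [EReal.sub_top, EReal.bot_sub]

lemma er_peel (u v C : ℝ) (w : EReal) (h : ((u + v:ℝ):EReal) - w ≤ (C:EReal)) :
    (u:EReal) - w ≤ ((C - v:ℝ):EReal) := by
  induction w using EReal.rec with
  | bot => rw [EReal.coe_sub_bot] at h; exact absurd h (by simp)
  | coe r =>
      rw [← EReal.coe_sub] at h ⊢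
      rw [EReal.coe_le_coe_iff] at h ⊢
      linarith
  | top => simp [EReal.sub_top]

lemma er_sub_coe_le {b : EReal} {m : ℝ} (hb : b ≤ (m:EReal)) {cc r : ℝ} (h : -cc ≤ r) :
    b - (cc:EReal) ≤ ((m + r:ℝ):EReal) := by
  calc b - (cc:EReal) ≤ (m:EReal) - (cc:EReal) := EReal.sub_le_sub hb le_rfl
    _ = ((m - cc:ℝ):EReal) := (EReal.coe_sub _ _).symm
    _ ≤ _ := EReal.coe_le_coe_iff.mpr (by linarith)

lemma coercive {n : ℕ} (ψ : Euc n → EReal) (x₀ : Euc n) (φr : Euc n → ℝ)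
    (hfin : ∀ᶠ x in 𝓝 x₀, legendre ψ x = (φr x : EReal)) :
    ∃ c : ℝ, 0 < c ∧ ∃ C : ℝ, ∀ y : Euc n,
      ((inner ℝ x₀ y : ℝ) : EReal) - ψ y ≤ ((C - c * ‖y‖ : ℝ) : EReal) := by
  obtain ⟨δ, hδ, hball⟩ := Metric.eventually_nhds_iff.mp hfin
  have hsq : (0:ℝ) < Real.sqrt (n+1) := Real.sqrt_pos.mpr (by positivity)
  set c : ℝ := δ / (2 * Real.sqrt (n+1)) with hc
  have hcpos : 0 < c := by positivity
  set Φ : (Fin n → Fin 3) → ℝ := fun g =>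
    φr (x₀ + c • ((WithLp.equiv 2 (Fin n → ℝ)).symm (fun i => ((g i : ℕ) : ℝ) - 1))) with hΦ
  obtain ⟨C, hC⟩ := (Set.finite_range Φ).bddAbove
  refine ⟨c, hcpos, C, fun y => ?_⟩
  set s : Euc n := (WithLp.equiv 2 (Fin n → ℝ)).symm (fun i => Real.sign (y i)) with hs
  have hsi : ∀ i, s i = Real.sign (y i) := fun i => rfl
  set g : Fin n → Fin 3 := fun i => if y i < 0 then 0 else if y i = 0 then 1 else 2 with hg
  have hgs : (fun i => ((g i : ℕ) : ℝ) - 1) = fun i => Real.sign (y i) := by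
    funext i
    rcases lt_trichotomy (y i) 0 with h|h|h
    · simp [hg, h, Real.sign_of_neg h]
    · simp [hg, h, Real.sign_zero]
    · simp [hg, not_lt.mpr h.le, h.ne', Real.sign_of_pos h]; norm_num
  set xy : Euc n := x₀ + c • s with hxy
  have hΦg : Φ g = φr xy := by rw [hΦ]; simp only; rw [hgs]
  have hsnorm : ‖s‖ ≤ Real.sqrt n := by
    rw [EuclideanSpace.norm_eq]
    apply Real.sqrt_le_sqrt
    calc (∑ i, ‖s i‖^2) ≤ ∑ _i : Fin n, 1 := by
          apply Finset.sum_le_sum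
          intro i _
          rcases Real.sign_apply_eq (y i) with h|h|h <;> simp [hsi, h, Real.norm_eq_abs]
      _ = n := by simp
  have hdist : dist xy x₀ < δ := by
    rw [hxy, dist_eq_norm]
    simp only [add_sub_cancel_left]
    rw [norm_smul, Real.norm_eq_abs, abs_of_pos hcpos]
    calc c * ‖s‖ ≤ c * Real.sqrt n := mul_le_mul_of_nonneg_left hsnorm hcpos.le
      _ ≤ δ / 2 := by
          rw [hc, div_mul_eq_mul_div, mul_comm 2 (Real.sqrt (n+1)), ← div_div]
          apply div_le_div_of_nonneg_right ?_ (by norm_num)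
          rw [div_le_iff₀ hsq]
          exact mul_le_mul_of_nonneg_left (Real.sqrt_le_sqrt (by norm_num)) hδ.le
      _ < δ := by linarith
  have hleg := hball hdist
  have hkey : ((inner ℝ xy y : ℝ):EReal) - ψ y ≤ (C:EReal) := by
    refine le_trans (le_iSup (fun z => ((inner ℝ xy z : ℝ):EReal) - ψ z) y) ?_
    rw [show (⨆ z, ((inner ℝ xy z : ℝ):EReal) - ψ z) = legendre ψ xy from rfl, hleg]
    exact EReal.coe_le_coe_iff.mpr (by rw [← hΦg]; exact hC (Set.mem_range_self g))
  have hsy : (inner ℝ s y : ℝ) = ∑ i, |y i| := by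
    rw [show (inner ℝ s y : ℝ) = ∑ i, s i * y i by
      simp [PiLp.inner_apply, RCLike.inner_apply, mul_comm]]
    apply Finset.sum_congr rfl
    intro i _
    rcases lt_trichotomy (y i) 0 with h|h|h
    · rw [hsi, Real.sign_of_neg h, abs_of_neg h]; ring
    · simp [hsi, h]
    · rw [hsi, Real.sign_of_pos h, abs_of_pos h]; ring
  have hxyy : (inner ℝ xy y : ℝ) = (inner ℝ x₀ y : ℝ) + c * ∑ i, |y i| := by
    rw [hxy, inner_add_left, real_inner_smul_left, hsy]
  have hnorm_le : ‖y‖ ≤ ∑ i, |y i| := by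
    rw [EuclideanSpace.norm_eq]
    have h1 : ∀ i ∈ Finset.univ, (0:ℝ) ≤ |y i| := fun i _ => abs_nonneg _
    calc Real.sqrt (∑ i, ‖y i‖^2) ≤ Real.sqrt ((∑ i, |y i|)^2) := by
          apply Real.sqrt_le_sqrt
          simpa [Real.norm_eq_abs, sq_abs] using Finset.sum_sq_le_sq_sum_of_nonneg h1
      _ = |(∑ i, |y i|)| := Real.sqrt_sq_eq_abs _
      _ = ∑ i, |y i| := abs_of_nonneg (Finset.sum_nonneg h1)
  have hmono : ((inner ℝ x₀ y : ℝ) + c * ‖y‖ : ℝ) ≤ (inner ℝ xy y : ℝ) := by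
    rw [hxyy]
    have := mul_le_mul_of_nonneg_left hnorm_le hcpos.le
    linarith
  refine er_peel _ _ _ _ (le_trans ?_ hkey)
  exact EReal.sub_le_sub (EReal.coe_le_coe_iff.mpr hmono) (le_refl _)

lemma usc_G {n : ℕ} (ψ : Euc n → EReal) (α : Euc n → ℝ) (hψ : LowerSemicontinuous ψ)
    (hα : LowerSemicontinuous α) (x₀ : Euc n) (t : ℝ) (ht : 0 ≤ t) :
    UpperSemicontinuous
      (fun y : Euc n => ((inner ℝ x₀ y : ℝ):EReal) - ψ y - ((t * α y : ℝ):EReal)) := by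
  have hrw : (fun y : Euc n => ((inner ℝ x₀ y : ℝ):EReal) - ψ y - ((t * α y : ℝ):EReal))
      = fun y => (((inner ℝ x₀ y : ℝ) - t * α y : ℝ):EReal) + (-(ψ y)) := by
    funext y
    rw [er_shuffle, sub_eq_add_neg]
  rw [hrw]
  have h1 : UpperSemicontinuous (fun y : Euc n => (inner ℝ x₀ y : ℝ) - t * α y) := by
    have hlsc : LowerSemicontinuous (fun y : Euc n => t * α y) := by
      have := Continuous.comp_lowerSemicontinuous (g := fun r : ℝ => t * r)
        (continuous_const.mul continuous_id) hα
        (fun a b h => mul_le_mul_of_nonneg_left h ht)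
      exact this
    have husc : UpperSemicontinuous (fun y : Euc n => -(t * α y)) := by
      have := Continuous.comp_lowerSemicontinuous_antitone (g := fun r : ℝ => -r)
        continuous_neg hlsc (fun a b h => neg_le_neg h)
      exact this
    have hcont : Continuous (fun y : Euc n => (inner ℝ x₀ y : ℝ)) :=
      continuous_const.inner continuous_id
    simpa [sub_eq_add_neg] using hcont.upperSemicontinuous.add husc
  have h2 : UpperSemicontinuous (fun y : Euc n => (((inner ℝ x₀ y : ℝ) - t * α y : ℝ):EReal)) :=
    Continuous.comp_upperSemicontinuous (g := ((↑) : ℝ → EReal)) continuous_coe_real_ereal h1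
      (fun a b h => EReal.coe_le_coe_iff.mpr h)
  have h3 : UpperSemicontinuous (fun y : Euc n => -(ψ y)) :=
    Continuous.comp_lowerSemicontinuous_antitone continuous_neg hψ
      (fun a b h => EReal.neg_le_neg_iff.mpr h)
  exact h2.add' h3 (fun y => EReal.continuousAt_add
    (Or.inl (EReal.coe_ne_top _)) (Or.inl (EReal.coe_ne_bot _)))

lemma uniq_core {n : ℕ} (φr : Euc n → ℝ) (x₀ y₀ ystar : Euc n)
    (hgrad : HasGradientAt φr y₀ x₀)
    (hlow : ∀ᶠ x in 𝓝 x₀, φr x₀ + (inner ℝ (x - x₀) ystar : ℝ) ≤ φr x) :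
    ystar = y₀ := by
  by_contra hne
  set v : Euc n := ystar - y₀ with hv
  have hvne : v ≠ 0 := sub_ne_zero.mpr hne
  have hvpos : 0 < ‖v‖ := norm_pos_iff.mpr hvne
  have hfd := hgrad.hasFDerivAt
  rw [hasFDerivAt_iff_isLittleO] at hfd
  have hsmall := hfd.def (half_pos hvpos)
  have hboth := hlow.and hsmall
  rw [Metric.eventually_nhds_iff] at hboth
  obtain ⟨δ, hδ, hb⟩ := hboth
  set s : ℝ := δ / (2 * ‖v‖) with hs
  have hspos : 0 < s := by positivity
  set x : Euc n := x₀ + s • v with hx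
  have hxx₀ : x - x₀ = s • v := by rw [hx]; abel
  have hsv : s * ‖v‖ = δ / 2 := by rw [hs]; field_simp
  have hdist : dist x x₀ < δ := by
    rw [dist_eq_norm, hxx₀, norm_smul, Real.norm_eq_abs, abs_of_pos hspos, hsv]
    linarith
  obtain ⟨h1, h2⟩ := hb hdist
  have htd : (InnerProductSpace.toDual ℝ (Euc n) y₀) (x - x₀) = (inner ℝ y₀ (x - x₀) : ℝ) :=
    InnerProductSpace.toDual_apply_apply
  rw [htd] at h2
  have hA : s * ‖v‖^2 ≤ φr x - φr x₀ - (inner ℝ y₀ (x - x₀) : ℝ) := by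
    have h3 : (inner ℝ (x - x₀) ystar : ℝ) - (inner ℝ y₀ (x - x₀) : ℝ) = s * ‖v‖^2 := by
      rw [hxx₀, real_inner_smul_left, real_inner_smul_right, ← mul_sub]
      congr 1
      rw [real_inner_comm v y₀, ← inner_sub_right, ← hv, real_inner_self_eq_norm_sq]
    linarith
  have hnx : ‖x - x₀‖ = s * ‖v‖ := by
    rw [hxx₀, norm_smul, Real.norm_eq_abs, abs_of_pos hspos]
  rw [hnx, Real.norm_eq_abs] at h2
  have := le_trans hA (le_trans (le_abs_self _) h2)
  nlinarith [mul_pos hspos (mul_pos hvpos hvpos)]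

/-- maximizers `y_t` of `G_t(y) = ⟨x₀,y⟩ - ψ(y) - tα(y)` exist for
`t ∈ [0,1]`, any choice of maximizers is bounded, and `y_t → ∇φ(x₀)` as `t → 0⁺`. -/
theorem statement18 {n : ℕ} (ψ : Euc n → EReal) (α : Euc n → ℝ)
    (hψ : LowerSemicontinuous ψ) (hα : LowerSemicontinuous α)
    (M : ℝ) (hbdd : ∀ y, -M ≤ α y) (hψ0 : ψ 0 ≠ ⊤)
    (x₀ : Euc n) (φr : Euc n → ℝ) (y₀ : Euc n)
    (hfin : ∀ᶠ x in 𝓝 x₀, legendre ψ x = (φr x : EReal))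
    (hgrad : HasGradientAt φr y₀ x₀) :
    (∀ t ∈ Set.Icc (0:ℝ) 1, ∃ y : Euc n, ∀ z : Euc n,
        ((inner ℝ x₀ z : ℝ) : EReal) - ψ z - ((t * α z : ℝ) : EReal) ≤
          ((inner ℝ x₀ y : ℝ) : EReal) - ψ y - ((t * α y : ℝ) : EReal)) ∧
    ∀ yt : ℝ → Euc n,
      (∀ t ∈ Set.Icc (0:ℝ) 1, ∀ z : Euc n,
        ((inner ℝ x₀ z : ℝ) : EReal) - ψ z - ((t * α z : ℝ) : EReal) ≤
          ((inner ℝ x₀ (yt t) : ℝ) : EReal) - ψ (yt t) - ((t * α (yt t) : ℝ) : EReal)) →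
      Bornology.IsBounded (yt '' Set.Icc (0:ℝ) 1) ∧
        Tendsto yt (𝓝[>] 0) (𝓝 y₀) := by
  classical
  have hψbot : ∀ y, ψ y ≠ ⊥ := by
    intro y hy
    have h2 := le_iSup (fun z => ((inner ℝ x₀ z : ℝ):EReal) - ψ z) y
    rw [hy, EReal.coe_sub_bot] at h2
    rw [show (⨆ z, ((inner ℝ x₀ z:ℝ):EReal) - ψ z) = legendre ψ x₀ from rfl,
      hfin.self_of_nhds] at h2
    exact (EReal.coe_ne_top _) (top_le_iff.mp h2)
  obtain ⟨c, hcpos, C, hcoer⟩ := coercive ψ x₀ φr hfin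
  obtain ⟨r0, hr0⟩ : ∃ r : ℝ, ψ 0 = (r:EReal) :=
    ⟨(ψ 0).toReal, (EReal.coe_toReal hψ0 (hψbot 0)).symm⟩
  set g₀ : ℝ := -r0 - |α 0| with hg₀
  have hub : ∀ t ∈ Set.Icc (0:ℝ) 1, ∀ y : Euc n,
      ((inner ℝ x₀ y : ℝ):EReal) - ψ y - ((t * α y:ℝ):EReal)
        ≤ ((C + |M| - c*‖y‖ : ℝ):EReal) := by
    intro t ht y
    refine le_trans (EReal.sub_le_sub (hcoer y) (le_refl ((t * α y:ℝ):EReal))) ?_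
    rw [← EReal.coe_sub]
    apply EReal.coe_le_coe_iff.mpr
    have hM : -(t * α y) ≤ |M| := by
      nlinarith [hbdd y, ht.1, ht.2, le_abs_self M, abs_nonneg M]
    linarith
  have hlb : ∀ t ∈ Set.Icc (0:ℝ) 1,
      ((g₀:ℝ):EReal) ≤ ((inner ℝ x₀ (0:Euc n) : ℝ):EReal) - ψ 0 - ((t * α 0:ℝ):EReal) := by
    intro t ht
    rw [show (inner ℝ x₀ (0:Euc n) : ℝ) = 0 from inner_zero_right x₀, hr0,
      ← EReal.coe_sub, ← EReal.coe_sub]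
    apply EReal.coe_le_coe_iff.mpr
    rw [hg₀]
    nlinarith [le_abs_self (α 0), abs_nonneg (α 0), neg_abs_le (α 0), ht.1, ht.2]
  have hg₀C : g₀ ≤ C + |M| := by
    have h := (hlb 0 ⟨le_rfl, zero_le_one⟩).trans (hub 0 ⟨le_rfl, zero_le_one⟩ 0)
    rw [EReal.coe_le_coe_iff] at h
    simpa using h
  set R₀ : ℝ := (C + |M| - g₀)/c with hR₀
  have hR₀0 : 0 ≤ R₀ := div_nonneg (by linarith) hcpos.le
  have hcR₀ : c * R₀ = C + |M| - g₀ := by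
    rw [hR₀, mul_div_cancel₀ _ hcpos.ne']
  have hmaxbound : ∀ t ∈ Set.Icc (0:ℝ) 1, ∀ y : Euc n,
      (∀ z : Euc n, ((inner ℝ x₀ z : ℝ):EReal) - ψ z - ((t * α z:ℝ):EReal)
        ≤ ((inner ℝ x₀ y : ℝ):EReal) - ψ y - ((t * α y:ℝ):EReal)) → ‖y‖ ≤ R₀ := by
    intro t ht y hmax
    have h1 := (hlb t ht).trans ((hmax 0).trans (hub t ht y))
    rw [EReal.coe_le_coe_iff] at h1
    rw [le_div_iff₀ hcpos]
    linarith
  have hexists : ∀ t ∈ Set.Icc (0:ℝ) 1, ∃ y : Euc n, ∀ z : Euc n,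
      ((inner ℝ x₀ z : ℝ):EReal) - ψ z - ((t * α z:ℝ):EReal)
        ≤ ((inner ℝ x₀ y : ℝ):EReal) - ψ y - ((t * α y:ℝ):EReal) := by
    intro t ht
    have h0K : (0:Euc n) ∈ Metric.closedBall (0:Euc n) (R₀+1) := by
      simp [Metric.mem_closedBall]
      linarith
    obtain ⟨y, hyK, hymax⟩ := usc_exists_max (usc_G ψ α hψ hα x₀ t ht.1)
      (isCompact_closedBall (0:Euc n) (R₀+1)) Metric.isClosed_closedBall ⟨0, h0K⟩
    refine ⟨y, fun z => ?_⟩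
    by_cases hz : z ∈ Metric.closedBall (0:Euc n) (R₀+1)
    · exact hymax z hz
    · have hz' : R₀ + 1 < ‖z‖ := by
        rw [Metric.mem_closedBall, dist_zero_right, not_le] at hz
        exact hz
      calc ((inner ℝ x₀ z : ℝ):EReal) - ψ z - ((t * α z:ℝ):EReal)
          ≤ ((C + |M| - c*‖z‖ : ℝ):EReal) := hub t ht z
        _ ≤ ((g₀:ℝ):EReal) := by
            apply EReal.coe_le_coe_iff.mpr
            nlinarith [mul_lt_mul_of_pos_left hz' hcpos]
        _ ≤ ((inner ℝ x₀ (0:Euc n) : ℝ):EReal) - ψ 0 - ((t * α 0:ℝ):EReal) := hlb t ht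
        _ ≤ _ := hymax 0 h0K
  have hG0 : ∀ y : Euc n, ((inner ℝ x₀ y : ℝ):EReal) - ψ y - (((0:ℝ) * α y:ℝ):EReal)
      = ((inner ℝ x₀ y : ℝ):EReal) - ψ y := by
    intro y
    norm_num
  have hHmax_eq : ∀ w : Euc n,
      (∀ z : Euc n, ((inner ℝ x₀ z:ℝ):EReal) - ψ z ≤ ((inner ℝ x₀ w:ℝ):EReal) - ψ w) →
      ((inner ℝ x₀ w:ℝ):EReal) - ψ w = ((φr x₀ : ℝ):EReal) := by
    intro w hw
    apply le_antisymm
    · exact le_trans (le_iSup (fun z => ((inner ℝ x₀ z:ℝ):EReal) - ψ z) w)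
        (le_of_eq hfin.self_of_nhds)
    · rw [← hfin.self_of_nhds]
      exact iSup_le hw
  have huniq : ∀ w : Euc n,
      (∀ z : Euc n, ((inner ℝ x₀ z:ℝ):EReal) - ψ z ≤ ((inner ℝ x₀ w:ℝ):EReal) - ψ w) → w = y₀ := by
    intro w hw
    have hVal := hHmax_eq w hw
    have hwtop : ψ w ≠ ⊤ := by
      intro h
      rw [h, EReal.sub_top] at hVal
      exact (EReal.coe_ne_bot _) hVal.symm
    obtain ⟨p, hp⟩ : ∃ p:ℝ, ψ w = (p:EReal) := ⟨_, (EReal.coe_toReal hwtop (hψbot w)).symm⟩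
    rw [hp, ← EReal.coe_sub, EReal.coe_eq_coe_iff] at hVal
    apply uniq_core φr x₀ y₀ w hgrad
    filter_upwards [hfin] with x hx
    have h2 : ((inner ℝ x w:ℝ):EReal) - ψ w ≤ legendre ψ x :=
      le_iSup (fun z => ((inner ℝ x z:ℝ):EReal) - ψ z) w
    rw [hx, hp, ← EReal.coe_sub, EReal.coe_le_coe_iff] at h2
    have h3 : (inner ℝ (x - x₀) w : ℝ) = (inner ℝ x w:ℝ) - (inner ℝ x₀ w:ℝ) := inner_sub_left x x₀ w
    linarith
  obtain ⟨ym, hym⟩ := hexists 0 ⟨le_rfl, zero_le_one⟩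
  have hym' : ∀ z : Euc n, ((inner ℝ x₀ z:ℝ):EReal) - ψ z ≤ ((inner ℝ x₀ ym:ℝ):EReal) - ψ ym := by
    intro z
    have := hym z
    rwa [hG0 z, hG0 ym] at this
  have hy₀eq : ym = y₀ := huniq ym hym'
  rw [hy₀eq] at hym'
  have hHy₀ : ((inner ℝ x₀ y₀:ℝ):EReal) - ψ y₀ = ((φr x₀ : ℝ):EReal) := hHmax_eq y₀ hym'
  refine ⟨hexists, fun yt hyt => ?_⟩
  have hytball : ∀ t ∈ Set.Icc (0:ℝ) 1, yt t ∈ Metric.closedBall (0:Euc n) R₀ := by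
    intro t ht
    rw [Metric.mem_closedBall, dist_zero_right]
    exact hmaxbound t ht (yt t) (hyt t ht)
  constructor
  · apply (Metric.isBounded_closedBall (x := (0:Euc n)) (r := R₀)).subset
    rintro _ ⟨t, ht, rfl⟩
    exact hytball t ht
  rw [Metric.tendsto_nhds]
  intro ε hε
  have key : ∃ t₁ > 0, ∀ t : ℝ, 0 < t → t < t₁ → t ≤ 1 → dist (yt t) y₀ < ε := by
    by_cases hK' : (Metric.closedBall (0:Euc n) R₀ \ Metric.ball y₀ ε).Nonempty
    · obtain ⟨y', hy'K, hy'max⟩ := usc_exists_max (usc_G ψ α hψ hα x₀ 0 le_rfl)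
        ((isCompact_closedBall (0:Euc n) R₀).diff Metric.isOpen_ball)
        (Metric.isClosed_closedBall.sdiff Metric.isOpen_ball) hK'
      have hy'H : ∀ z ∈ Metric.closedBall (0:Euc n) R₀ \ Metric.ball y₀ ε,
          ((inner ℝ x₀ z:ℝ):EReal) - ψ z ≤ ((inner ℝ x₀ y':ℝ):EReal) - ψ y' := by
        intro z hz
        have := hy'max z hz
        rwa [hG0 z, hG0 y'] at this
      have hstrict : ((inner ℝ x₀ y':ℝ):EReal) - ψ y' < ((φr x₀:ℝ):EReal) := by
        rcases lt_or_eq_of_le (le_trans (le_iSup (fun z => ((inner ℝ x₀ z:ℝ):EReal) - ψ z) y')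
          (le_of_eq hfin.self_of_nhds)) with h|h
        · exact h
        · exfalso
          have hglob : ∀ z : Euc n, ((inner ℝ x₀ z:ℝ):EReal) - ψ z
              ≤ ((inner ℝ x₀ y':ℝ):EReal) - ψ y' := by
            intro z
            rw [h, ← hfin.self_of_nhds]
            exact le_iSup (fun z => ((inner ℝ x₀ z:ℝ):EReal) - ψ z) z
          have h4 := huniq y' hglob
          rw [h4] at hy'K
          exact hy'K.2 (Metric.mem_ball_self hε)
      obtain ⟨m'', hm1, hm2⟩ := EReal.lt_iff_exists_real_btwn.mp hstrict
      have hm2' : m'' < φr x₀ := EReal.coe_lt_coe_iff.mp hm2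
      set D : ℝ := |M| + |α y₀| + 1 with hD
      have hDpos : 0 < D := by positivity
      refine ⟨(φr x₀ - m'')/D, div_pos (by linarith) hDpos, fun t ht0 ht1 ht2 => ?_⟩
      by_contra hdist
      push_neg at hdist
      have htIcc : t ∈ Set.Icc (0:ℝ) 1 := ⟨ht0.le, ht2⟩
      have hmem : yt t ∈ Metric.closedBall (0:Euc n) R₀ \ Metric.ball y₀ ε :=
        ⟨hytball t htIcc, by rw [Metric.mem_ball]; exact not_lt.mpr hdist⟩
      have hup : ((inner ℝ x₀ (yt t):ℝ):EReal) - ψ (yt t) - ((t * α (yt t):ℝ):EReal)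
          ≤ ((m'' + t*|M| : ℝ):EReal) := by
        refine er_sub_coe_le ((hy'H _ hmem).trans hm1.le) ?_
        nlinarith [hbdd (yt t), le_abs_self M, ht0.le]
      have hlow2 : ((φr x₀ - t*|α y₀| : ℝ):EReal)
          ≤ ((inner ℝ x₀ (yt t):ℝ):EReal) - ψ (yt t) - ((t * α (yt t):ℝ):EReal) := by
        refine le_trans ?_ (hyt t htIcc y₀)
        have heq : ((inner ℝ x₀ y₀:ℝ):EReal) - ψ y₀ - ((t * α y₀:ℝ):EReal)
            = ((φr x₀ - t*α y₀:ℝ):EReal) := by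
          rw [hHy₀, ← EReal.coe_sub]
        rw [heq]
        apply EReal.coe_le_coe_iff.mpr
        nlinarith [le_abs_self (α y₀), neg_abs_le (α y₀), ht0.le]
      have hcomb := hlow2.trans hup
      rw [EReal.coe_le_coe_iff] at hcomb
      have h5 : t * D < φr x₀ - m'' := by
        have h6 := mul_lt_mul_of_pos_right ht1 hDpos
        rwa [div_mul_cancel₀ _ hDpos.ne'] at h6
      have h7 : t * D = t*|M| + t*|α y₀| + t := by rw [hD]; ring
      linarith
    · refine ⟨1, one_pos, fun t ht0 ht1 ht2 => ?_⟩
      by_contra h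
      push_neg at h
      exact hK' ⟨yt t, hytball t ⟨ht0.le, ht2⟩, by rw [Metric.mem_ball]; exact not_lt.mpr h⟩
  obtain ⟨t₁, ht₁, hkey⟩ := key
  filter_upwards [Ioo_mem_nhdsGT_of_mem
    (⟨le_rfl, lt_min ht₁ one_pos⟩ : (0:ℝ) ∈ Set.Ico 0 (min t₁ 1))] with t ht
  exact hkey t ht.1 (lt_of_lt_of_le ht.2 (min_le_left _ _))
    (le_of_lt (lt_of_lt_of_le ht.2 (min_le_right _ _)))

end
end
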